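/- arXiv:1206.3620 — 7 statements merged into one kernel-verified Lean document; each statement's English description precedes it below -/
import Mathlib

section
/- Let H be a bialgebra over a commutative ring R and let x_1, …, x_k ∈ H be primitive elements. Then for every integer a ≥ 1, the symmetrized product Σ_{σ ∈ S_k} x_{σ(1)} x_{σ(2)} ⋯ x_{σ(k)} is an eigenvector of the a-th Hopf-power map Ψ^a with eigenvalue a^k; that is, Ψ^a(Σ_{σ ∈ S_k} x_{σ(1)} ⋯ x_{σ(k)}) = a^k · Σ_{σ ∈ S_k} x_{σ(1)} ⋯ x_{σ(k)}. -/
open TensorProduct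

/-- The `a`-th Hopf-power map `Ψ^a = m^{[a]} ∘ Δ^{[a]}`, defined by the convolution
recursion `Ψ^0 = unit ∘ counit`, `Ψ^{a+1} = m ∘ (id ⊗ Ψ^a) ∘ Δ`. -/
noncomputable def hopfPower (R H : Type*) [CommRing R] [Ring H] [Bialgebra R H] :
    ℕ → (H →ₗ[R] H)
  | 0 => (Algebra.linearMap R H) ∘ₗ (Coalgebra.counit)
  | (a + 1) =>
      (LinearMap.mul' R H) ∘ₗ
        (TensorProduct.map LinearMap.id (hopfPower R H a)) ∘ₗ (Coalgebra.comul)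

section Aux

variable {R H : Type*} [CommRing R] [Ring H] [Bialgebra R H]

lemma alg_counit_prim (y : H) (hy : Coalgebra.comul (R := R) y = 1 ⊗ₜ[R] y + y ⊗ₜ[R] 1) :
    algebraMap R H (Coalgebra.counit y) = 0 := by
  have h := Coalgebra.rTensor_counit_comul (R := R) y
  rw [hy, map_add, LinearMap.rTensor_tmul, LinearMap.rTensor_tmul, Bialgebra.counit_one] at h
  have h2 : (Coalgebra.counit y : R) ⊗ₜ[R] (1 : H) = (0 : R ⊗[R] H) := by
    have := congrArg (fun z => z - (1:R) ⊗ₜ[R] y) h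
    simpa [add_sub_cancel_left] using this
  have := congrArg (TensorProduct.lid R H) h2
  simpa [Algebra.algebraMap_eq_smul_one] using this

lemma comul_pow_prim (y : H) (hy : Coalgebra.comul (R := R) y = 1 ⊗ₜ[R] y + y ⊗ₜ[R] 1)
    (n : ℕ) :
    Coalgebra.comul (R := R) (y ^ n)
      = ∑ m ∈ Finset.range (n + 1),
          (n.choose m) • (((y ^ (n - m)) ⊗ₜ[R] (y ^ m)) : H ⊗[R] H) := by
  have hc : Commute ((1 : H) ⊗ₜ[R] y) (y ⊗ₜ[R] (1 : H)) := by
    simp [Commute, SemiconjBy, Algebra.TensorProduct.tmul_mul_tmul]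
  have h := map_pow (Bialgebra.comulAlgHom R H) y n
  have h' : Coalgebra.comul (R := R) (y ^ n) = (Coalgebra.comul (R := R) y) ^ n := h
  rw [h', hy, hc.add_pow]
  refine Finset.sum_congr rfl fun m hm => ?_
  rw [Algebra.TensorProduct.tmul_pow, Algebra.TensorProduct.tmul_pow, one_pow, one_pow,
    Algebra.TensorProduct.tmul_mul_tmul, one_mul, mul_one]
  rw [nsmul_eq_mul, (Nat.cast_commute _ _).eq]

lemma hopfPower_pow (y : H) (hy : Coalgebra.comul (R := R) y = 1 ⊗ₜ[R] y + y ⊗ₜ[R] 1)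
    (a n : ℕ) : hopfPower R H a (y ^ n) = (a ^ n : ℕ) • y ^ n := by
  induction a generalizing n with
  | zero =>
    have : hopfPower R H 0 (y ^ n) = algebraMap R H (Coalgebra.counit (y ^ n)) := rfl
    rw [this, Bialgebra.counit_pow, map_pow, alg_counit_prim y hy]
    cases n with
    | zero => simp
    | succ m => simp [zero_pow]
  | succ a ih =>
    have h0 : hopfPower R H (a + 1) (y ^ n)
        = (LinearMap.mul' R H)
            ((TensorProduct.map LinearMap.id (hopfPower R H a))
              (Coalgebra.comul (R := R) (y ^ n))) := rfl
    rw [h0, comul_pow_prim y hy n, map_sum, map_sum]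
    have hterm : ∀ m ∈ Finset.range (n + 1),
        (LinearMap.mul' R H)
            ((TensorProduct.map LinearMap.id (hopfPower R H a))
              ((n.choose m) • (((y ^ (n - m)) ⊗ₜ[R] (y ^ m)) : H ⊗[R] H)))
          = (n.choose m * a ^ m) • y ^ n := by
      intro m hm
      rw [map_nsmul, map_nsmul, TensorProduct.map_tmul, LinearMap.id_coe, id_eq, ih m,
        tmul_smul, map_nsmul, LinearMap.mul'_apply, ← pow_add, smul_smul]
      have hmn := Finset.mem_range.mp hm
      congr 2
      omega
    rw [Finset.sum_congr rfl hterm, ← Finset.sum_smul]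
    congr 1
    rw [add_pow a 1 n]
    exact Finset.sum_congr rfl fun m hm => by push_cast; ring

lemma sum_pow_expand {H : Type*} [Ring H] {ι : Type*} [DecidableEq ι]
    (x : ι → H) (s : Finset ι) (n : ℕ) :
    (∑ i ∈ s, x i) ^ n
      = ∑ f ∈ Fintype.piFinset (fun _ : Fin n => s), (List.ofFn fun j => x (f j)).prod := by
  induction n with
  | zero => simp
  | succ n ih =>
    rw [pow_succ', ih, Finset.sum_mul]
    simp_rw [Finset.mul_sum]
    rw [← Finset.sum_product']
    refine Finset.sum_nbij' (i := fun p => Fin.cons p.1 p.2) (j := fun g => (g 0, Fin.tail g))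
      ?_ ?_ ?_ ?_ ?_
    · intro p hp
      rw [Finset.mem_product] at hp
      rw [Fintype.mem_piFinset]
      intro j
      refine Fin.cases ?_ ?_ j
      · simpa using hp.1
      · intro j'
        simpa using Fintype.mem_piFinset.mp hp.2 j'
    · intro g hg
      rw [Fintype.mem_piFinset] at hg
      rw [Finset.mem_product]
      exact ⟨hg 0, Fintype.mem_piFinset.mpr fun j => hg j.succ⟩
    · intro p hp
      simp [Fin.tail_cons]
    · intro g hg
      simp [Fin.cons_self_tail]
    · intro p hp
      rw [List.ofFn_succ]
      simp [List.prod_cons, Fin.cons_succ]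

lemma coef_lemma (k : ℕ) (f : Fin k → Fin k) :
    (∑ T : Finset (Fin k), if (∀ j, f j ∈ T) then ((-1 : ℤ) ^ (k - T.card)) else 0)
      = if Function.Surjective f then 1 else 0 := by
  classical
  set S : Finset (Fin k) := Finset.image f Finset.univ with hS
  have h1 : ∀ T : Finset (Fin k),
      (if (∀ j, f j ∈ T) then ((-1 : ℤ) ^ (k - T.card)) else 0)
        = (if S ⊆ T then ((-1 : ℤ) ^ (k - T.card)) else 0) := by
    intro T
    congr 1
    simp [hS, Finset.image_subset_iff, eq_iff_iff]
  rw [Finset.sum_congr rfl fun T _ => h1 T]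
  rw [← Equiv.sum_comp (Function.Involutive.toPerm (compl : Finset (Fin k) → Finset (Fin k)) compl_involutive)
    (fun T => if S ⊆ T then ((-1 : ℤ) ^ (k - T.card)) else 0)]
  have h2 : ∀ T : Finset (Fin k),
      (if S ⊆ Tᶜ then ((-1 : ℤ) ^ (k - Tᶜ.card)) else 0)
        = (if T ⊆ Sᶜ then ((-1 : ℤ) ^ T.card) else 0) := by
    intro T
    have hcard : k - Tᶜ.card = T.card := by
      have h4 : T.card ≤ k := by simpa using Finset.card_le_univ T
      rw [Finset.card_compl, Fintype.card_fin]
      omega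
    rw [hcard]
    congr 1
    rw [eq_iff_iff]
    show S ≤ Tᶜ ↔ T ≤ Sᶜ
    exact le_compl_comm
  simp only [Function.Involutive.coe_toPerm]
  erw [Finset.sum_congr rfl fun T _ => h2 T]
  have h3 : (Finset.univ : Finset (Finset (Fin k))).filter (· ⊆ Sᶜ) = Sᶜ.powerset := by
    ext T; simp
  rw [← Finset.sum_filter, h3, Finset.sum_powerset_neg_one_pow_card]
  congr 1
  rw [eq_iff_iff, Finset.compl_eq_empty_iff]
  constructor
  · intro h b
    have hb : b ∈ S := by rw [h]; exact Finset.mem_univ b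
    rw [hS] at hb
    obtain ⟨a, -, ha⟩ := Finset.mem_image.mp hb
    exact ⟨a, ha⟩
  · intro h
    refine Finset.eq_univ_of_forall ?_
    intro b
    obtain ⟨a, ha⟩ := h b
    rw [hS]
    exact Finset.mem_image.mpr ⟨a, Finset.mem_univ a, ha⟩

lemma polarization {H : Type*} [Ring H] (k : ℕ) (x : Fin k → H) :
    ∑ σ : Equiv.Perm (Fin k), (List.ofFn fun i => x (σ i)).prod
      = ∑ T : Finset (Fin k), (-1 : ℤ) ^ (k - T.card) • (∑ i ∈ T, x i) ^ k := by
  classical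
  have hps : ∀ T : Finset (Fin k),
      Fintype.piFinset (fun _ : Fin k => T)
        = Finset.univ.filter (fun f : Fin k → Fin k => ∀ j, f j ∈ T) := by
    intro T; ext f; simp [Fintype.mem_piFinset]
  have hr : (∑ T : Finset (Fin k), (-1 : ℤ) ^ (k - T.card) • (∑ i ∈ T, x i) ^ k)
      = ∑ T : Finset (Fin k), ∑ f : Fin k → Fin k,
          (-1:ℤ)^(k - T.card) •
            (if (∀ j, f j ∈ T) then (List.ofFn fun j => x (f j)).prod else 0) :=
    Finset.sum_congr rfl fun T _ => by
      rw [sum_pow_expand, hps T, Finset.sum_filter, Finset.smul_sum]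
  rw [hr, Finset.sum_comm]
  have hterm : ∀ f : Fin k → Fin k,
      (∑ T : Finset (Fin k),
        (-1:ℤ)^(k - T.card) •
          (if (∀ j, f j ∈ T) then (List.ofFn fun j => x (f j)).prod else 0))
      = (if Function.Surjective f then (1:ℤ) else 0) • (List.ofFn fun j => x (f j)).prod := by
    intro f
    rw [← coef_lemma k f, Finset.sum_smul]
    refine Finset.sum_congr rfl fun T _ => ?_
    split <;> simp
  rw [Finset.sum_congr rfl fun f _ => hterm f]
  simp_rw [ite_smul, one_smul, zero_smul]
  rw [← Finset.sum_filter]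
  refine Finset.sum_bij (fun (σ : Equiv.Perm (Fin k)) _ => (⇑σ : Fin k → Fin k)) ?_ ?_ ?_ ?_
  · intro σ _
    exact Finset.mem_filter.mpr ⟨Finset.mem_univ _, σ.surjective⟩
  · intro σ _ τ _ h
    exact Equiv.coe_fn_injective h
  · intro f hf
    have hf' : Function.Surjective f := (Finset.mem_filter.mp hf).2
    exact ⟨Equiv.ofBijective f hf'.bijective_of_finite, Finset.mem_univ _, rfl⟩
  · intro σ _
    rfl

end Aux

/-- The symmetrized product of primitive elements is an eigenvector of the `a`-th
Hopf-power map with eigenvalue `a^k`. -/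
theorem hopfPower_symmetrized_product_eigenvector
    {R H : Type*} [CommRing R] [Ring H] [Bialgebra R H]
    (k : ℕ) (x : Fin k → H)
    (hx : ∀ i, Coalgebra.comul (R := R) (x i) = 1 ⊗ₜ[R] x i + x i ⊗ₜ[R] 1)
    (a : ℕ) (ha : 1 ≤ a) :
    hopfPower R H a (∑ σ : Equiv.Perm (Fin k), (List.ofFn fun i => x (σ i)).prod) =
      (a ^ k : ℕ) • ∑ σ : Equiv.Perm (Fin k), (List.ofFn fun i => x (σ i)).prod := by
  classical
  have hprim : ∀ T : Finset (Fin k),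
      Coalgebra.comul (R := R) (∑ i ∈ T, x i)
        = 1 ⊗ₜ[R] (∑ i ∈ T, x i) + (∑ i ∈ T, x i) ⊗ₜ[R] 1 := by
    intro T
    rw [map_sum, Finset.sum_congr rfl fun i _ => hx i, Finset.sum_add_distrib,
      TensorProduct.tmul_sum, TensorProduct.sum_tmul]
  rw [polarization k x, map_sum, Finset.smul_sum]
  refine Finset.sum_congr rfl fun T _ => ?_
  rw [map_zsmul, hopfPower_pow _ (hprim T) a k]
  simp only [← natCast_zsmul, smul_smul]
  rw [mul_comm]
end

section
/- For every n ≥ 1, the rock-breaking transition matrix P_n, viewed as a matrix over ℚ indexed by the partitions of n, is diagonalizable, and its characteristic polynomial equals ∏_{l=1}^{n} (X − 2^{l−n})^{p(n,l)}, where p(n,l) is the number of partitions of n into exactly l parts. In particular the eigenvalues of P_n are exactly 1, 1/2, 1/4, …, 1/2^{n−1}, and the multiplicity of the eigenvalue 2^{l−n} is the number of partitions of n into l parts. -/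
open scoped Classical

/-- One step of the rock-breaking chain: each part of `lam` is broken by an independent
symmetric binomial split, and empty pieces are discarded. -/
noncomputable def rockP (n : ℕ) (lam mu : Nat.Partition n) : ℚ :=
  ((2 : ℚ) ^ n)⁻¹ *
    ∑ s : ((j : Fin lam.parts.toList.length) → Fin (lam.parts.toList.get j + 1)),
      if ((↑(List.ofFn fun j => (s j : ℕ)) +
            ↑(List.ofFn fun j => lam.parts.toList.get j - (s j : ℕ)) : Multiset ℕ).filter
            (fun x => x ≠ 0)) = mu.parts
      then ∏ j, ((lam.parts.toList.get j).choose (s j) : ℚ)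
      else 0

/-- The rock-breaking transition matrix on partitions of `n`. -/
noncomputable def rockMatrix (n : ℕ) : Matrix (Nat.Partition n) (Nat.Partition n) ℚ :=
  Matrix.of fun lam mu => rockP n lam mu

open Finset

/-- coercion of `List.ofFn` to a multiset as a finite sum of singletons -/
lemma coe_ofFn_eq_sum {α : Type*} {m : ℕ} (f : Fin m → α) :
    (↑(List.ofFn f) : Multiset α) = ∑ j : Fin m, ({f j} : Multiset α) := by
  have h1 : (↑(List.ofFn f) : Multiset α) = Multiset.map f ↑(List.finRange m) := by
    rw [List.ofFn_eq_map]; rfl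
  have h2 : (↑(List.finRange m) : Multiset (Fin m)) = (Finset.univ : Finset (Fin m)).val := rfl
  have h3 := map_sum (Multiset.mapAddMonoidHom f)
    (fun j => ({j} : Multiset (Fin m))) (Finset.univ : Finset (Fin m))
  simp only [Multiset.coe_mapAddMonoidHom, Multiset.map_singleton] at h3
  rw [h1, h2, ← Finset.sum_multiset_singleton (Finset.univ : Finset (Fin m)), h3]

section Split
variable {n : ℕ} (lam : Nat.Partition n)

/-- result of a split; syntactically the expression occurring in `rockP` -/
noncomputable def splitMS
    (s : (j : Fin lam.parts.toList.length) → Fin (lam.parts.toList.get j + 1)) : Multiset ℕ :=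
  ((↑(List.ofFn fun j => (s j : ℕ)) +
      ↑(List.ofFn fun j => lam.parts.toList.get j - (s j : ℕ)) : Multiset ℕ).filter
      (fun x => x ≠ 0))

variable (s : (j : Fin lam.parts.toList.length) → Fin (lam.parts.toList.get j + 1))

noncomputable def gpart (j : Fin lam.parts.toList.length) : Multiset ℕ :=
  Multiset.filter (fun x => x ≠ 0)
    ({(s j : ℕ)} + {lam.parts.toList.get j - (s j : ℕ)})

lemma splitMS_eq_sum : splitMS lam s = ∑ j, gpart lam s j := by
  unfold splitMS gpart
  rw [coe_ofFn_eq_sum, coe_ofFn_eq_sum, ← Finset.sum_add_distrib]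
  have h3 := map_sum
    (AddMonoidHom.mk (ZeroHom.mk (Multiset.filter (fun x : ℕ => x ≠ 0))
      (Multiset.filter_zero _)) (fun a b => Multiset.filter_add _ a b))
    (fun j => ({(s j : ℕ)} + {lam.parts.toList.get j - (s j : ℕ)} : Multiset ℕ))
    (Finset.univ : Finset (Fin lam.parts.toList.length))
  simpa only [AddMonoidHom.coe_mk, ZeroHom.coe_mk] using h3

lemma part_pos (j : Fin lam.parts.toList.length) : 0 < lam.parts.toList.get j :=
  lam.parts_pos (by rw [← Multiset.mem_toList]; exact List.get_mem lam.parts.toList j)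

lemma sval_le (j : Fin lam.parts.toList.length) : (s j : ℕ) ≤ lam.parts.toList.get j :=
  Nat.lt_succ_iff.mp (s j).isLt

lemma pair_filter_trivial {a v : ℕ} (ha : 0 < a) (hv : v ≤ a) (h : v = 0 ∨ v = a) :
    Multiset.filter (fun x => x ≠ 0) ({v} + {a - v}) = {a} := by
  rcases h with rfl | rfl
  · simp [Multiset.filter_singleton, ha.ne']
  · simp [Multiset.filter_singleton, ha.ne']

lemma pair_filter_card {a v : ℕ} (ha : 0 < a) (hv : v ≤ a) :
    1 ≤ Multiset.card (Multiset.filter (fun x => x ≠ 0) ({v} + {a - v})) ∧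
    (Multiset.card (Multiset.filter (fun x => x ≠ 0) ({v} + {a - v})) ≤ 1 →
      v = 0 ∨ v = a) := by
  by_cases h0 : v = 0
  · rw [pair_filter_trivial ha hv (Or.inl h0)]; exact ⟨le_refl _, fun _ => Or.inl h0⟩
  by_cases hA : v = a
  · rw [pair_filter_trivial ha hv (Or.inr hA)]; exact ⟨le_refl _, fun _ => Or.inr hA⟩
  · have hva : a - v ≠ 0 := by omega
    rw [Multiset.filter_add, Multiset.filter_singleton, Multiset.filter_singleton,
      if_pos h0, if_pos hva]
    simp

lemma one_le_card_gpart (j : Fin lam.parts.toList.length) :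
    1 ≤ Multiset.card (gpart lam s j) :=
  (pair_filter_card (part_pos lam j) (sval_le lam s j)).1

lemma card_splitMS : Multiset.card (splitMS lam s) = ∑ j, Multiset.card (gpart lam s j) := by
  rw [splitMS_eq_sum]
  have h3 := map_sum
    (AddMonoidHom.mk (ZeroHom.mk (Multiset.card (α := ℕ)) Multiset.card_zero)
      (fun a b => Multiset.card_add a b)) (fun j => gpart lam s j)
    (Finset.univ : Finset (Fin lam.parts.toList.length))
  simpa only [AddMonoidHom.coe_mk, ZeroHom.coe_mk] using h3

lemma length_le_card_splitMS : lam.parts.toList.length ≤ Multiset.card (splitMS lam s) := by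
  rw [card_splitMS]
  calc lam.parts.toList.length = ∑ _j : Fin lam.parts.toList.length, 1 := by simp
    _ ≤ ∑ j, Multiset.card (gpart lam s j) :=
      Finset.sum_le_sum fun j _ => one_le_card_gpart lam s j

lemma parts_eq_sum_singleton :
    (∑ j : Fin lam.parts.toList.length, ({lam.parts.toList.get j} : Multiset ℕ)) = lam.parts := by
  rw [← coe_ofFn_eq_sum, List.ofFn_get, Multiset.coe_toList]

lemma splitMS_of_trivial
    (h : ∀ j, (s j : ℕ) = 0 ∨ (s j : ℕ) = lam.parts.toList.get j) :
    splitMS lam s = lam.parts := by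
  rw [splitMS_eq_sum]
  have h1 : ∀ j, gpart lam s j = {lam.parts.toList.get j} := fun j =>
    pair_filter_trivial (part_pos lam j) (sval_le lam s j) (h j)
  exact (Finset.sum_congr rfl fun j _ => h1 j).trans (parts_eq_sum_singleton lam)

lemma trivial_of_card_le
    (h : Multiset.card (splitMS lam s) ≤ lam.parts.toList.length) :
    ∀ j, (s j : ℕ) = 0 ∨ (s j : ℕ) = lam.parts.toList.get j := by
  intro j
  refine (pair_filter_card (part_pos lam j) (sval_le lam s j)).2 ?_
  by_contra hc
  push_neg at hc
  have h2 : 2 ≤ Multiset.card (gpart lam s j) := hc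
  have hlt : (∑ _j : Fin lam.parts.toList.length, 1) <
      ∑ j, Multiset.card (gpart lam s j) := by
    refine Finset.sum_lt_sum (fun i _ => one_le_card_gpart lam s i) ⟨j, Finset.mem_univ j, ?_⟩
    omega
  rw [← card_splitMS] at hlt
  simp only [Finset.sum_const, Finset.card_univ, Fintype.card_fin, smul_eq_mul, mul_one] at hlt
  omega

end Split

section RockLemmas
variable {n : ℕ}

lemma rockMatrix_apply_eq_zero {lam mu : Nat.Partition n}
    (h1 : Multiset.card mu.parts ≤ Multiset.card lam.parts) (h2 : mu ≠ lam) :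
    rockMatrix n lam mu = 0 := by
  show rockP n lam mu = 0
  unfold rockP
  rw [Finset.sum_eq_zero, mul_zero]
  intro s _
  rw [if_neg]
  intro hcond
  have hms : splitMS lam s = mu.parts := hcond
  have hlen : lam.parts.toList.length = Multiset.card lam.parts := Multiset.length_toList _
  have hge := length_le_card_splitMS lam s
  rw [hms] at hge
  have hle : Multiset.card (splitMS lam s) ≤ lam.parts.toList.length := by
    rw [hms]; omega
  have htriv := trivial_of_card_le lam s hle
  have : splitMS lam s = lam.parts := splitMS_of_trivial lam s htriv
  rw [hms] at this
  exact h2 (Nat.Partition.ext this)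

lemma rockMatrix_apply_self (lam : Nat.Partition n) :
    rockMatrix n lam lam = (2 : ℚ) ^ (Multiset.card lam.parts) * ((2 : ℚ) ^ n)⁻¹ := by
  show rockP n lam lam = _
  unfold rockP
  rw [mul_comm]
  congr 1
  have hlen : lam.parts.toList.length = Multiset.card lam.parts := Multiset.length_toList _
  have hstep : ∀ s : ((j : Fin lam.parts.toList.length) → Fin (lam.parts.toList.get j + 1)),
      (if ((↑(List.ofFn fun j => (s j : ℕ)) +
            ↑(List.ofFn fun j => lam.parts.toList.get j - (s j : ℕ)) : Multiset ℕ).filter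
            (fun x => x ≠ 0)) = lam.parts
        then ∏ j, ((lam.parts.toList.get j).choose (s j) : ℚ) else 0) =
      (if (∀ j, (s j : ℕ) = 0 ∨ (s j : ℕ) = lam.parts.toList.get j) then (1 : ℚ) else 0) := by
    intro s
    by_cases htriv : ∀ j, (s j : ℕ) = 0 ∨ (s j : ℕ) = lam.parts.toList.get j
    · have hc : ((↑(List.ofFn fun j => (s j : ℕ)) +
            ↑(List.ofFn fun j => lam.parts.toList.get j - (s j : ℕ)) : Multiset ℕ).filter
            (fun x => x ≠ 0)) = lam.parts := splitMS_of_trivial lam s htriv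
      rw [if_pos htriv, if_pos hc]
      refine Finset.prod_eq_one fun j _ => ?_
      rcases htriv j with h | h
      · rw [h]; simp
      · rw [h]; simp
    · rw [if_neg htriv, if_neg]
      intro hcond
      have hms : splitMS lam s = lam.parts := hcond
      exact htriv (trivial_of_card_le lam s (by rw [hms]; omega))
  rw [Finset.sum_congr rfl fun s _ => hstep s]
  rw [Finset.sum_boole]
  have hset : Finset.univ.filter
      (fun s : ((j : Fin lam.parts.toList.length) → Fin (lam.parts.toList.get j + 1)) =>
        ∀ j, (s j : ℕ) = 0 ∨ (s j : ℕ) = lam.parts.toList.get j) =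
      Fintype.piFinset (fun j => ({0, ⟨lam.parts.toList.get j, Nat.lt_succ_self _⟩} :
        Finset (Fin (lam.parts.toList.get j + 1)))) := by
    ext s
    simp only [Finset.mem_filter, Finset.mem_univ, true_and, Fintype.mem_piFinset,
      Finset.mem_insert, Finset.mem_singleton]
    refine forall_congr' fun j => ?_
    constructor
    · rintro (h | h)
      · left; exact Fin.ext (by simpa using h)
      · right; exact Fin.ext (by simpa using h)
    · rintro (h | h)
      · left; rw [h]; rfl
      · right; rw [h]
  rw [hset, Fintype.card_piFinset]
  have hcard : ∀ j : Fin lam.parts.toList.length,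
      ({0, ⟨lam.parts.toList.get j, Nat.lt_succ_self _⟩} :
        Finset (Fin (lam.parts.toList.get j + 1))).card = 2 := by
    intro j
    rw [Finset.card_insert_of_notMem, Finset.card_singleton]
    simp only [Finset.mem_singleton]
    intro h
    have := part_pos lam j
    have h0 : (0 : ℕ) = lam.parts.toList.get j := congrArg Fin.val h
    omega
  rw [Finset.prod_congr rfl fun j _ => hcard j]
  rw [Finset.prod_const, Finset.card_univ, Fintype.card_fin, hlen]
  push_cast
  ring
end RockLemmas


open Polynomial Module DirectSum

variable {K : Type*} [Field K] {V : Type*} [AddCommGroup V] [Module K V]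

lemma ker_aeval_coprime_le (f : Module.End K V) {p q : K[X]} (h : IsCoprime p q) :
    LinearMap.ker (aeval f (p * q)) ≤
      LinearMap.ker (aeval f p) ⊔ LinearMap.ker (aeval f q) := by
  obtain ⟨u, v, huv⟩ := h
  intro x hx
  rw [LinearMap.mem_ker] at hx
  have hx1 : (aeval f (u * p)) x + (aeval f (v * q)) x = x := by
    rw [← LinearMap.add_apply, ← map_add, huv, map_one, Module.End.one_apply]
  have h1 : (aeval f (v * q)) x ∈ LinearMap.ker (aeval f p) := by
    rw [LinearMap.mem_ker, ← Module.End.mul_apply, ← map_mul]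
    have hpq : p * (v * q) = v * (p * q) := by ring
    rw [hpq, map_mul, Module.End.mul_apply, hx, map_zero]
  have h2 : (aeval f (u * p)) x ∈ LinearMap.ker (aeval f q) := by
    rw [LinearMap.mem_ker, ← Module.End.mul_apply, ← map_mul]
    have hpq : q * (u * p) = u * (p * q) := by ring
    rw [hpq, map_mul, Module.End.mul_apply, hx, map_zero]
  rw [← hx1]
  exact Submodule.add_mem _ (Submodule.mem_sup_right h2) (Submodule.mem_sup_left h1)

lemma ker_aeval_prod_le (f : Module.End K V) (s : Finset K) :
    LinearMap.ker (aeval f (∏ c ∈ s, (X - C c))) ≤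
      ⨆ c ∈ s, LinearMap.ker (aeval f (X - C c)) := by
  classical
  induction s using Finset.induction_on with
  | empty => simp [Module.End.one_eq_id]
  | @insert a s ha ih =>
    rw [Finset.prod_insert ha]
    have hcop : IsCoprime (X - C a) (∏ c ∈ s, (X - C c)) := by
      refine IsCoprime.prod_right fun c hc => ?_
      have hac : a ≠ c := fun hac => ha (hac ▸ hc)
      exact Polynomial.isCoprime_X_sub_C_of_isUnit_sub (sub_ne_zero_of_ne hac).isUnit
    refine le_trans (ker_aeval_coprime_le f hcop) ?_
    refine sup_le ?_ (le_trans ih ?_)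
    · exact le_iSup_of_le a (le_iSup_of_le (Finset.mem_insert_self a s) le_rfl)
    · exact iSup_le fun c => iSup_le fun hc =>
        le_iSup_of_le c (le_iSup_of_le (Finset.mem_insert_of_mem hc) le_rfl)

/-- A matrix annihilated by a product of distinct linear factors is diagonalizable. -/
lemma diagonalizable_of_aeval_prod_eq_zero {ι : Type*} [Fintype ι] [DecidableEq ι]
    (A : Matrix ι ι K) (s : Finset K)
    (h : aeval A (∏ c ∈ s, (X - C c)) = 0) :
    ∃ (P : Matrix ι ι K) (d : ι → K), IsUnit P.det ∧ A = P * Matrix.diagonal d * P⁻¹ := by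
  classical
  set f : Module.End K (ι → K) := Matrix.toLinAlgEquiv' A with hf
  have haev : aeval f (∏ c ∈ s, (X - C c)) = 0 := by
    have h2 := Polynomial.aeval_algHom_apply
      (Matrix.toLinAlgEquiv' (R := K) (n := ι)).toAlgHom A (∏ c ∈ s, (X - C c))
    rw [h, map_zero] at h2
    rw [hf]
    simpa using h2
  have hsup : (⨆ c ∈ s, f.eigenspace c) = ⊤ := by
    have hk := ker_aeval_prod_le f s
    rw [haev, LinearMap.ker_zero, top_le_iff] at hk
    have heq : ∀ c : K, LinearMap.ker (aeval f (X - C c)) = f.eigenspace c := by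
      intro c
      rw [Module.End.eigenspace_def, map_sub, aeval_X, aeval_C,
        Algebra.algebraMap_eq_smul_one]
    simp only [heq] at hk
    exact hk
  have hInd : iSupIndep (fun c : s => f.eigenspace (c : K)) :=
    (Module.End.eigenspaces_iSupIndep f).comp Subtype.val_injective
  have hSup : (⨆ c : s, f.eigenspace (c : K)) = ⊤ := by
    rw [iSup_subtype]; exact hsup
  have hInternal : DirectSum.IsInternal (fun c : s => f.eigenspace (c : K)) :=
    (isInternal_submodule_iff_iSupIndep_and_iSup_eq_top _).mpr ⟨hInd, hSup⟩
  let B := hInternal.collectedBasis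
    (fun c : s => Module.finBasis K (f.eigenspace (c : K)))
  let e := B.indexEquiv (Pi.basisFun K ι)
  let b := B.reindex e
  let d : ι → K := fun i => ((e.symm i).1 : K)
  have hb : ∀ i, f (b i) = d i • b i := by
    intro i
    have hbe : b i = B (e.symm i) := B.reindex_apply e i
    have hmem : B (e.symm i) ∈ f.eigenspace (d i) :=
      hInternal.collectedBasis_mem
        (fun c : s => Module.finBasis K (f.eigenspace (c : K))) (e.symm i)
    rw [hbe]
    exact Module.End.mem_eigenspace_iff.mp hmem
  have hD : LinearMap.toMatrix b b f = Matrix.diagonal d := by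
    ext i j
    rw [LinearMap.toMatrix_apply, hb j, map_smul, Basis.repr_self,
      Finsupp.smul_single, smul_eq_mul, mul_one, Finsupp.single_apply,
      Matrix.diagonal_apply]
    rcases eq_or_ne i j with rfl | hij
    · simp
    · rw [if_neg (Ne.symm hij), if_neg hij]
  let pb := Pi.basisFun K ι
  have hA : LinearMap.toMatrix pb pb f = A := by
    rw [hf, LinearMap.toMatrix_eq_toMatrix']
    exact LinearMap.toMatrix'_toLin' A
  have hchg := basis_toMatrix_mul_linearMap_toMatrix_mul_basis_toMatrix pb b pb b f
  have hPQ : pb.toMatrix b * b.toMatrix pb = 1 := Basis.toMatrix_mul_toMatrix_flip pb b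
  refine ⟨pb.toMatrix b, d, Matrix.isUnit_det_of_right_inverse hPQ, ?_⟩
  rw [Matrix.inv_eq_right_inv hPQ, ← hA, ← hchg, hD]

section Charpoly
open Polynomial
variable {n : ℕ}

noncomputable def rockEV (n : ℕ) (l : ℕ) : ℚ := (2 : ℚ) ^ ((l : ℤ) - (n : ℤ))

lemma rockMatrix_diag (lam : Nat.Partition n) :
    rockMatrix n lam lam = rockEV n (Multiset.card lam.parts) := by
  rw [rockMatrix_apply_self, rockEV, zpow_sub₀ (two_ne_zero), zpow_natCast, zpow_natCast,
    div_eq_mul_inv]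

lemma rockEV_injective : Function.Injective (rockEV n) := by
  intro a b h
  have h2 := zpow_right_injective₀ (by norm_num : (0:ℚ) < 2) (by norm_num) h
  omega

lemma card_parts_pos (hn : 1 ≤ n) (lam : Nat.Partition n) :
    1 ≤ Multiset.card lam.parts := by
  rcases Nat.eq_zero_or_pos (Multiset.card lam.parts) with h | h
  · exfalso
    have := lam.parts_sum
    rw [Multiset.card_eq_zero.mp h] at this
    simp at this
    omega
  · exact h

lemma card_parts_le (lam : Nat.Partition n) : Multiset.card lam.parts ≤ n := by
  have h := Multiset.card_nsmul_le_sum (s := lam.parts) (a := 1)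
    (fun x hx => lam.parts_pos hx)
  rw [lam.parts_sum, smul_eq_mul, mul_one] at h
  exact h

lemma rockMatrix_blockTriangular :
    (rockMatrix n).BlockTriangular (fun lam => Multiset.card lam.parts) := by
  intro i j h
  exact rockMatrix_apply_eq_zero (le_of_lt h) (fun e => by rw [e] at h; exact lt_irrefl _ h)

lemma charpoly_diagonal_const {ι : Type*} [Fintype ι] [DecidableEq ι] (c : ℚ) :
    (Matrix.diagonal (fun _ : ι => c)).charpoly = (X - C c) ^ (Fintype.card ι) := by
  have h : Matrix.charmatrix (Matrix.diagonal fun _ : ι => c) =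
      Matrix.diagonal (fun _ : ι => (X : ℚ[X]) - C c) := by
    ext i j
    by_cases hij : i = j
    · subst hij
      rw [Matrix.charmatrix_apply_eq, Matrix.diagonal_apply_eq, Matrix.diagonal_apply_eq]
    · rw [Matrix.charmatrix_apply_ne _ _ _ hij, Matrix.diagonal_apply_ne _ hij,
        Matrix.diagonal_apply_ne _ hij, map_zero, neg_zero]
  rw [Matrix.charpoly, h, Matrix.det_diagonal, Finset.prod_const, Finset.card_univ]

lemma rockMatrix_squareBlock (a : ℕ) :
    (rockMatrix n).toSquareBlock (fun lam => Multiset.card lam.parts) a =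
      Matrix.diagonal (fun _ => rockEV n a) := by
  ext i j
  by_cases hij : i = j
  · subst hij
    simp only [Matrix.toSquareBlock_def, Matrix.of_apply, Matrix.diagonal_apply_eq]
    rw [rockMatrix_diag, i.2]
  · simp only [Matrix.toSquareBlock_def, Matrix.of_apply, Matrix.diagonal_apply_ne _ hij]
    have hne : (j : Nat.Partition n) ≠ (i : Nat.Partition n) :=
      fun e => hij (Subtype.ext e.symm)
    exact rockMatrix_apply_eq_zero (by rw [i.2, j.2]) hne

lemma rockMatrix_charpoly (hn : 1 ≤ n) :
    (rockMatrix n).charpoly =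
      ∏ l ∈ Finset.Icc 1 n,
        (X - C (rockEV n l)) ^
          (Finset.univ.filter
            (fun lam : Nat.Partition n => Multiset.card lam.parts = l)).card := by
  rw [(rockMatrix_blockTriangular (n := n)).charpoly]
  have hfac : ∀ a ∈ Finset.image (fun lam : Nat.Partition n => Multiset.card lam.parts)
      Finset.univ,
      ((rockMatrix n).toSquareBlock (fun lam => Multiset.card lam.parts) a).charpoly =
        (X - C (rockEV n a)) ^
          (Finset.univ.filter
            (fun lam : Nat.Partition n => Multiset.card lam.parts = a)).card := by
    intro a _
    rw [rockMatrix_squareBlock, charpoly_diagonal_const]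
    congr 1
    rw [Fintype.card_subtype]
  rw [Finset.prod_congr rfl hfac]
  refine Finset.prod_subset ?_ ?_
  · intro a ha
    rw [Finset.mem_image] at ha
    obtain ⟨lam, _, rfl⟩ := ha
    rw [Finset.mem_Icc]
    exact ⟨card_parts_pos hn lam, card_parts_le lam⟩
  · intro l _ hl
    have hempty : (Finset.univ.filter
        (fun lam : Nat.Partition n => Multiset.card lam.parts = l)).card = 0 := by
      rw [Finset.card_eq_zero, Finset.filter_eq_empty_iff]
      intro lam _ he
      exact hl (Finset.mem_image.mpr ⟨lam, Finset.mem_univ _, he⟩)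
    rw [hempty, pow_zero]

lemma rockMatrix_aeval_zero (hn : 1 ≤ n) :
    aeval (rockMatrix n) (∏ l ∈ Finset.Icc 1 n, (X - C (rockEV n l))) = 0 := by
  have key : ∀ k, ∀ lam mu : Nat.Partition n, Multiset.card mu.parts ≤ k →
      (aeval (rockMatrix n) (∏ l ∈ Finset.Icc 1 k, (X - C (rockEV n l)))) lam mu = 0 := by
    intro k
    induction k with
    | zero =>
      intro lam mu hmu
      exact absurd hmu (by have := card_parts_pos hn mu; omega)
    | succ k ih =>
      intro lam mu hmu
      rw [Finset.prod_Icc_succ_top (by omega), map_mul]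
      have hX : aeval (rockMatrix n) (X - C (rockEV n (k + 1))) =
          rockMatrix n - (rockEV n (k + 1)) • 1 := by
        rw [map_sub, aeval_X, aeval_C, Algebra.algebraMap_eq_smul_one]
      rw [hX, Matrix.mul_apply]
      refine Finset.sum_eq_zero fun nu _ => ?_
      by_cases hnu : Multiset.card nu.parts ≤ k
      · rw [ih lam nu hnu, zero_mul]
      · have h2 : (rockMatrix n - (rockEV n (k + 1)) • 1) nu mu = 0 := by
          rw [Matrix.sub_apply, Matrix.smul_apply, Matrix.one_apply]
          by_cases hvm : nu = mu
          · subst hvm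
            have hcard : Multiset.card nu.parts = k + 1 := by omega
            rw [if_pos rfl, smul_eq_mul, mul_one, rockMatrix_diag, hcard, sub_self]
          · rw [if_neg hvm, smul_zero, sub_zero]
            exact rockMatrix_apply_eq_zero (by omega) (fun e => hvm e.symm)
        rw [h2, mul_zero]
  ext lam mu
  rw [Matrix.zero_apply]
  exact key n lam mu (card_parts_le mu)
end Charpoly

/-- The rock-breaking transition matrix is diagonalizable over `ℚ` and its
characteristic polynomial is `∏_{l=1}^{n} (X - 2^{l-n})^{p(n,l)}`, where `p(n,l)` is
the number of partitions of `n` into exactly `l` parts. -/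
theorem rockBreaking_diagonalizable_charpoly (n : ℕ) (hn : 1 ≤ n) :
    (∃ (P : Matrix (Nat.Partition n) (Nat.Partition n) ℚ) (d : Nat.Partition n → ℚ),
      IsUnit P.det ∧ rockMatrix n = P * Matrix.diagonal d * P⁻¹) ∧
    (rockMatrix n).charpoly =
      ∏ l ∈ Finset.Icc 1 n,
        (Polynomial.X - Polynomial.C ((2 : ℚ) ^ ((l : ℤ) - (n : ℤ)))) ^
          (Finset.univ.filter
            (fun lam : Nat.Partition n => Multiset.card lam.parts = l)).card := by
  constructor
  · apply diagonalizable_of_aeval_prod_eq_zero (rockMatrix n)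
      ((Finset.Icc 1 n).image (rockEV n))
    rw [Finset.prod_image (fun a _ b _ h => rockEV_injective h)]
    exact rockMatrix_aeval_zero hn
  · exact rockMatrix_charpoly hn
end

section
/- Fix n ≥ 1 and an integer r with 1 ≤ r. The function f(λ) = Σ_{j=1}^{l(λ)} C(λ_j, r), defined on partitions λ of n, is a right eigenfunction of the rock-breaking chain with eigenvalue 2^{1−r}: for every partition λ of n, Σ_μ P_n(λ, μ) Σ_{j=1}^{l(μ)} C(μ_j, r) = 2^{1−r} · Σ_{j=1}^{l(λ)} C(λ_j, r). -/
open scoped Classical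

open Finset in
private lemma nat_sum_choose_mul (m r : ℕ) :
    ∑ t ∈ range (m + 1), m.choose t * t.choose r = m.choose r * 2 ^ (m - r) := by
  rcases lt_or_ge m r with h | h
  · rw [Nat.choose_eq_zero_of_lt h, Nat.zero_mul]
    apply Finset.sum_eq_zero
    intro t ht
    rw [Nat.choose_eq_zero_of_lt (lt_of_le_of_lt (Nat.lt_succ_iff.mp (mem_range.mp ht)) h),
      Nat.mul_zero]
  · have h1 : ∑ t ∈ range (m + 1), m.choose t * t.choose r
        = ∑ t ∈ Ico r (m + 1), m.choose t * t.choose r := by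
      rw [range_eq_Ico]
      refine (Finset.sum_subset (Finset.Ico_subset_Ico (Nat.zero_le r) le_rfl) ?_).symm
      intro t ht' ht
      have : t < r := by
        simp only [mem_Ico] at ht' ht
        omega
      rw [Nat.choose_eq_zero_of_lt this, Nat.mul_zero]
    rw [h1, Finset.sum_Ico_eq_sum_range]
    have hm : m + 1 - r = (m - r) + 1 := by omega
    rw [hm, ← Nat.sum_range_choose (m - r), Finset.mul_sum]
    refine Finset.sum_congr rfl fun i hi => ?_
    have hi' : r + i ≤ m := by
      have := mem_range.mp hi; omega
    rw [Nat.choose_mul (n := m) (Nat.le_add_right r i), Nat.add_sub_cancel_left]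

open Finset in
private lemma q_sum_choose_mul (m r : ℕ) :
    ∑ t ∈ range (m + 1), ((t.choose r : ℚ) * (m.choose t : ℚ))
      = (m.choose r : ℚ) * 2 ^ (m - r) := by
  have := nat_sum_choose_mul m r
  have h2 : ((∑ t ∈ range (m + 1), m.choose t * t.choose r : ℕ) : ℚ)
      = ((m.choose r * 2 ^ (m - r) : ℕ) : ℚ) := by rw [this]
  push_cast at h2
  rw [← h2]
  push_cast
  exact Finset.sum_congr rfl fun t _ => mul_comm _ _

open Finset in
private lemma key_sum (m r : ℕ) :
    ∑ t : Fin (m + 1), (((t : ℕ).choose r : ℚ) + ((m - (t : ℕ)).choose r : ℚ))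
        * (m.choose (t : ℕ) : ℚ)
      = 2 * (m.choose r : ℚ) * 2 ^ (m - r) := by
  have hsplit : ∀ t : Fin (m + 1),
      (((t : ℕ).choose r : ℚ) + ((m - (t : ℕ)).choose r : ℚ)) * (m.choose (t : ℕ) : ℚ)
        = ((t : ℕ).choose r : ℚ) * (m.choose (t : ℕ) : ℚ)
          + ((m - (t : ℕ)).choose r : ℚ) * (m.choose (t : ℕ) : ℚ) := fun t => add_mul _ _ _
  rw [Finset.sum_congr rfl fun t _ => hsplit t, Finset.sum_add_distrib,
    Fin.sum_univ_eq_sum_range (fun t => ((t.choose r : ℚ)) * (m.choose t : ℚ)),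
    Fin.sum_univ_eq_sum_range (fun t => (((m - t).choose r : ℚ)) * (m.choose t : ℚ))]
  have hrefl : ∑ t ∈ range (m + 1), (((m - t).choose r : ℚ)) * (m.choose t : ℚ)
      = ∑ t ∈ range (m + 1), ((t.choose r : ℚ)) * (m.choose t : ℚ) := by
    rw [← Finset.sum_range_reflect (fun t => ((t.choose r : ℚ)) * (m.choose t : ℚ)) (m + 1)]
    refine Finset.sum_congr rfl fun t ht => ?_
    have ht' : t ≤ m := Nat.lt_succ_iff.mp (mem_range.mp ht)
    have h1 : m + 1 - 1 - t = m - t := by omega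
    rw [h1, Nat.choose_symm ht']
  rw [hrefl, q_sum_choose_mul]
  ring

open Finset in
private lemma fin_sum_choose (m : ℕ) : ∑ t : Fin (m + 1), (m.choose (t : ℕ) : ℚ) = 2 ^ m := by
  rw [Fin.sum_univ_eq_sum_range (fun t => (m.choose t : ℚ))]
  exact_mod_cast congrArg (Nat.cast : ℕ → ℚ) (Nat.sum_range_choose m)

/-- The function `λ ↦ Σ_j C(λ_j, r)` is a right eigenfunction of the rock-breaking
chain with eigenvalue `2^{1-r}`. -/
theorem rockBreaking_choose_eigenfunction (n r : ℕ) (hn : 1 ≤ n) (hr : 1 ≤ r)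
    (lam : Nat.Partition n) :
    ∑ mu : Nat.Partition n,
        rockP n lam mu * (mu.parts.map fun p => (p.choose r : ℚ)).sum =
      (2 : ℚ) ^ ((1 : ℤ) - (r : ℤ)) * (lam.parts.map fun p => (p.choose r : ℚ)).sum := by
  classical
  have hLsum : (∑ j : Fin lam.parts.toList.length, lam.parts.toList.get j) = n := by
    have h1 : lam.parts.toList.sum = n := by
      rw [Multiset.sum_toList, lam.parts_sum]
    have h2 : (∑ j : Fin lam.parts.toList.length, lam.parts.toList.get j)
        = lam.parts.toList.sum := by
      conv_rhs => rw [← List.ofFn_get lam.parts.toList]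
      rw [List.sum_ofFn]
    exact h2.trans h1
  have hFparts : (lam.parts.map fun p => (p.choose r : ℚ)).sum
      = ∑ j : Fin lam.parts.toList.length, ((lam.parts.toList.get j).choose r : ℚ) := by
    conv_lhs => rw [← Multiset.coe_toList lam.parts]
    rw [Multiset.map_coe, Multiset.sum_coe]
    conv_lhs => rw [← List.ofFn_get lam.parts.toList]
    rw [List.map_ofFn, List.sum_ofFn]
    rfl
  -- Step 1: for each splitting s, the sum over mu picks out a unique partition.
  have hstep1 : ∀ s : ((j : Fin lam.parts.toList.length) → Fin (lam.parts.toList.get j + 1)),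
      (∑ mu : Nat.Partition n,
        (if ((↑(List.ofFn fun j => (s j : ℕ)) +
              ↑(List.ofFn fun j => lam.parts.toList.get j - (s j : ℕ)) : Multiset ℕ).filter
              (fun x => x ≠ 0)) = mu.parts
         then ∏ j, ((lam.parts.toList.get j).choose (s j) : ℚ)
         else 0) * (mu.parts.map fun p => (p.choose r : ℚ)).sum)
      = (∏ j, ((lam.parts.toList.get j).choose (s j) : ℚ)) *
          ∑ j : Fin lam.parts.toList.length,
            (((s j : ℕ).choose r : ℚ) + ((lam.parts.toList.get j - (s j : ℕ)).choose r : ℚ)) := by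
    intro s
    set M0 : Multiset ℕ := (↑(List.ofFn fun j => (s j : ℕ)) +
        ↑(List.ofFn fun j => lam.parts.toList.get j - (s j : ℕ)) : Multiset ℕ) with hM0
    set M : Multiset ℕ := M0.filter (fun x => x ≠ 0) with hM
    have hM0sum : M0.sum = n := by
      rw [hM0, Multiset.sum_add, Multiset.sum_coe, Multiset.sum_coe, List.sum_ofFn,
        List.sum_ofFn, ← Finset.sum_add_distrib]
      have h3 : (∑ x : Fin lam.parts.toList.length,
          ((s x : ℕ) + (lam.parts.toList.get x - (s x : ℕ))))
          = ∑ j : Fin lam.parts.toList.length, lam.parts.toList.get j :=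
        Finset.sum_congr rfl fun j _ => by have := Fin.is_le (s j); omega
      exact h3.trans hLsum
    have hsumnot : (M0.filter (fun x => ¬ x ≠ 0)).sum = 0 := by
      apply Multiset.sum_eq_zero
      intro x hx
      have := Multiset.of_mem_filter hx
      simpa using this
    have hMsum : M.sum = n := by
      have hadd := Multiset.filter_add_not (fun x => x ≠ 0) M0
      calc M.sum = M.sum + (M0.filter (fun x => ¬ x ≠ 0)).sum := by rw [hsumnot, add_zero]
        _ = M0.sum := by rw [hM, ← Multiset.sum_add, hadd]
        _ = n := hM0sum
    have hMpos : ∀ {i : ℕ}, i ∈ M → 0 < i := by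
      intro i hi
      have := Multiset.of_mem_filter hi
      omega
    have hFM0 : (M0.map fun p => (p.choose r : ℚ)).sum
        = ∑ j : Fin lam.parts.toList.length,
            (((s j : ℕ).choose r : ℚ) + ((lam.parts.toList.get j - (s j : ℕ)).choose r : ℚ)) := by
      rw [hM0, Multiset.map_add, Multiset.sum_add, Multiset.map_coe, Multiset.map_coe,
        Multiset.sum_coe, Multiset.sum_coe, List.map_ofFn, List.map_ofFn, List.sum_ofFn,
        List.sum_ofFn, ← Finset.sum_add_distrib]
      rfl
    have hFM : (M.map fun p => (p.choose r : ℚ)).sum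
        = ∑ j : Fin lam.parts.toList.length,
            (((s j : ℕ).choose r : ℚ) + ((lam.parts.toList.get j - (s j : ℕ)).choose r : ℚ)) := by
      rw [← hFM0]
      have hadd := Multiset.filter_add_not (fun x => x ≠ 0) M0
      have hnotzero : ((M0.filter (fun x => ¬ x ≠ 0)).map fun p => (p.choose r : ℚ)).sum = 0 := by
        apply Multiset.sum_eq_zero
        intro x hx
        rw [Multiset.mem_map] at hx
        obtain ⟨p, hp, hpx⟩ := hx
        have hp0 : p = 0 := by simpa using Multiset.of_mem_filter hp
        rw [← hpx, hp0, Nat.choose_eq_zero_of_lt hr]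
        simp
      calc (M.map fun p => (p.choose r : ℚ)).sum
          = (M.map fun p => (p.choose r : ℚ)).sum
            + ((M0.filter (fun x => ¬ x ≠ 0)).map fun p => (p.choose r : ℚ)).sum := by
            rw [hnotzero, add_zero]
        _ = (M0.map fun p => (p.choose r : ℚ)).sum := by
            rw [hM, ← Multiset.sum_add, ← Multiset.map_add, hadd]
    set P0 : Nat.Partition n := ⟨M, hMpos, hMsum⟩ with hP0
    rw [Finset.sum_eq_single P0]
    · rw [if_pos rfl, hFM]
    · intro mu _ hne
      rw [if_neg, zero_mul]
      intro hc
      have : mu = P0 := Nat.Partition.ext hc.symm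
      exact hne this
    · intro h
      exact absurd (Finset.mem_univ P0) h
  -- Step 2: rewrite the left-hand side as a sum over splittings.
  have hLHS : (∑ mu : Nat.Partition n,
        rockP n lam mu * (mu.parts.map fun p => (p.choose r : ℚ)).sum)
      = ((2 : ℚ) ^ n)⁻¹ *
          ∑ s : ((j : Fin lam.parts.toList.length) → Fin (lam.parts.toList.get j + 1)),
            (∏ j, ((lam.parts.toList.get j).choose (s j) : ℚ)) *
              ∑ j : Fin lam.parts.toList.length,
                (((s j : ℕ).choose r : ℚ) +
                  ((lam.parts.toList.get j - (s j : ℕ)).choose r : ℚ)) := by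
    have h1 : ∀ mu : Nat.Partition n,
        rockP n lam mu * (mu.parts.map fun p => (p.choose r : ℚ)).sum
        = ∑ s : ((j : Fin lam.parts.toList.length) → Fin (lam.parts.toList.get j + 1)),
            ((2 : ℚ) ^ n)⁻¹ *
            ((if ((↑(List.ofFn fun j => (s j : ℕ)) +
                  ↑(List.ofFn fun j => lam.parts.toList.get j - (s j : ℕ)) : Multiset ℕ).filter
                  (fun x => x ≠ 0)) = mu.parts
              then ∏ j, ((lam.parts.toList.get j).choose (s j) : ℚ)
              else 0) * (mu.parts.map fun p => (p.choose r : ℚ)).sum) := by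
      intro mu
      rw [rockP, mul_assoc, Finset.sum_mul, Finset.mul_sum]
    calc (∑ mu : Nat.Partition n,
          rockP n lam mu * (mu.parts.map fun p => (p.choose r : ℚ)).sum)
        = ∑ mu : Nat.Partition n,
            ∑ s : ((j : Fin lam.parts.toList.length) → Fin (lam.parts.toList.get j + 1)),
              ((2 : ℚ) ^ n)⁻¹ *
              ((if ((↑(List.ofFn fun j => (s j : ℕ)) +
                    ↑(List.ofFn fun j => lam.parts.toList.get j - (s j : ℕ)) : Multiset ℕ).filter
                    (fun x => x ≠ 0)) = mu.parts
                then ∏ j, ((lam.parts.toList.get j).choose (s j) : ℚ)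
                else 0) * (mu.parts.map fun p => (p.choose r : ℚ)).sum) :=
          Finset.sum_congr rfl fun mu _ => h1 mu
      _ = ∑ s : ((j : Fin lam.parts.toList.length) → Fin (lam.parts.toList.get j + 1)),
            ∑ mu : Nat.Partition n,
              ((2 : ℚ) ^ n)⁻¹ *
              ((if ((↑(List.ofFn fun j => (s j : ℕ)) +
                    ↑(List.ofFn fun j => lam.parts.toList.get j - (s j : ℕ)) : Multiset ℕ).filter
                    (fun x => x ≠ 0)) = mu.parts
                then ∏ j, ((lam.parts.toList.get j).choose (s j) : ℚ)
                else 0) * (mu.parts.map fun p => (p.choose r : ℚ)).sum) := Finset.sum_comm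
      _ = ∑ s : ((j : Fin lam.parts.toList.length) → Fin (lam.parts.toList.get j + 1)),
            ((2 : ℚ) ^ n)⁻¹ *
            ((∏ j, ((lam.parts.toList.get j).choose (s j) : ℚ)) *
              ∑ j : Fin lam.parts.toList.length,
                (((s j : ℕ).choose r : ℚ) +
                  ((lam.parts.toList.get j - (s j : ℕ)).choose r : ℚ))) := by
          refine Finset.sum_congr rfl fun s _ => ?_
          rw [← Finset.mul_sum, hstep1 s]
      _ = ((2 : ℚ) ^ n)⁻¹ *
          ∑ s : ((j : Fin lam.parts.toList.length) → Fin (lam.parts.toList.get j + 1)),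
            (∏ j, ((lam.parts.toList.get j).choose (s j) : ℚ)) *
              ∑ j : Fin lam.parts.toList.length,
                (((s j : ℕ).choose r : ℚ) +
                  ((lam.parts.toList.get j - (s j : ℕ)).choose r : ℚ)) := by
          rw [Finset.mul_sum]
  rw [hLHS, hFparts]
  -- Step 3: factor the sum over splittings coordinatewise.
  have hswap2 : (∑ s : ((j : Fin lam.parts.toList.length) → Fin (lam.parts.toList.get j + 1)),
        (∏ j, ((lam.parts.toList.get j).choose (s j) : ℚ)) *
          ∑ j : Fin lam.parts.toList.length,
            (((s j : ℕ).choose r : ℚ) + ((lam.parts.toList.get j - (s j : ℕ)).choose r : ℚ)))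
      = ∑ j : Fin lam.parts.toList.length,
          ∑ s : ((i : Fin lam.parts.toList.length) → Fin (lam.parts.toList.get i + 1)),
            ∏ i, ((if i = j
                then (((s i : ℕ).choose r : ℚ) +
                  ((lam.parts.toList.get i - (s i : ℕ)).choose r : ℚ))
                else 1) * ((lam.parts.toList.get i).choose (s i) : ℚ)) := by
    calc (∑ s : ((j : Fin lam.parts.toList.length) → Fin (lam.parts.toList.get j + 1)),
        (∏ j, ((lam.parts.toList.get j).choose (s j) : ℚ)) *
          ∑ j : Fin lam.parts.toList.length,
            (((s j : ℕ).choose r : ℚ) + ((lam.parts.toList.get j - (s j : ℕ)).choose r : ℚ)))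
        = ∑ s : ((i : Fin lam.parts.toList.length) → Fin (lam.parts.toList.get i + 1)),
            ∑ j : Fin lam.parts.toList.length,
              (∏ i, ((lam.parts.toList.get i).choose (s i) : ℚ)) *
                (((s j : ℕ).choose r : ℚ) +
                  ((lam.parts.toList.get j - (s j : ℕ)).choose r : ℚ)) :=
          Finset.sum_congr rfl fun s _ => Finset.mul_sum _ _ _
      _ = ∑ j : Fin lam.parts.toList.length,
          ∑ s : ((i : Fin lam.parts.toList.length) → Fin (lam.parts.toList.get i + 1)),
              (∏ i, ((lam.parts.toList.get i).choose (s i) : ℚ)) *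
                (((s j : ℕ).choose r : ℚ) +
                  ((lam.parts.toList.get j - (s j : ℕ)).choose r : ℚ)) := Finset.sum_comm
      _ = ∑ j : Fin lam.parts.toList.length,
          ∑ s : ((i : Fin lam.parts.toList.length) → Fin (lam.parts.toList.get i + 1)),
            ∏ i, ((if i = j
                then (((s i : ℕ).choose r : ℚ) +
                  ((lam.parts.toList.get i - (s i : ℕ)).choose r : ℚ))
                else 1) * ((lam.parts.toList.get i).choose (s i) : ℚ)) := by
          refine Finset.sum_congr rfl fun j _ => Finset.sum_congr rfl fun s _ => ?_
          refine Eq.symm ?_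
          rw [Finset.prod_mul_distrib, Finset.prod_ite_eq' Finset.univ j, if_pos (Finset.mem_univ j)]
          ring
  -- Step 4: evaluate each inner factorized sum.
  have hfactor : ∀ j : Fin lam.parts.toList.length,
      (∑ s : ((i : Fin lam.parts.toList.length) → Fin (lam.parts.toList.get i + 1)),
        ∏ i, ((if i = j
            then (((s i : ℕ).choose r : ℚ) +
              ((lam.parts.toList.get i - (s i : ℕ)).choose r : ℚ))
            else 1) * ((lam.parts.toList.get i).choose (s i) : ℚ)))
      = (2 * ((lam.parts.toList.get j).choose r : ℚ) * 2 ^ (lam.parts.toList.get j - r)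
          * ((2 : ℚ) ^ (lam.parts.toList.get j))⁻¹) * 2 ^ n := by
    intro j
    have hpi : (∑ s : ((i : Fin lam.parts.toList.length) → Fin (lam.parts.toList.get i + 1)),
        ∏ i, ((if i = j
            then (((s i : ℕ).choose r : ℚ) +
              ((lam.parts.toList.get i - (s i : ℕ)).choose r : ℚ))
            else 1) * ((lam.parts.toList.get i).choose (s i) : ℚ)))
        = ∏ i, ∑ t : Fin (lam.parts.toList.get i + 1),
            ((if i = j
              then (((t : ℕ).choose r : ℚ) +
                ((lam.parts.toList.get i - (t : ℕ)).choose r : ℚ))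
              else 1) * ((lam.parts.toList.get i).choose (t : ℕ) : ℚ)) := by
      rw [Finset.prod_univ_sum]
      rw [Fintype.piFinset_univ]
    rw [hpi]
    have hinner : ∀ i : Fin lam.parts.toList.length,
        (∑ t : Fin (lam.parts.toList.get i + 1),
          ((if i = j
            then (((t : ℕ).choose r : ℚ) +
              ((lam.parts.toList.get i - (t : ℕ)).choose r : ℚ))
            else 1) * ((lam.parts.toList.get i).choose (t : ℕ) : ℚ)))
        = if i = j
            then 2 * ((lam.parts.toList.get i).choose r : ℚ) * 2 ^ (lam.parts.toList.get i - r)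
            else (2 : ℚ) ^ (lam.parts.toList.get i) := by
      intro i
      by_cases h : i = j
      · subst h
        simp only [if_pos rfl]
        exact key_sum (lam.parts.toList.get i) r
      · simp only [if_neg h, one_mul]
        exact fin_sum_choose (lam.parts.toList.get i)
    rw [Finset.prod_congr rfl fun i _ => hinner i]
    have h2 : ∀ i : Fin lam.parts.toList.length,
        (if i = j
          then 2 * ((lam.parts.toList.get i).choose r : ℚ) * 2 ^ (lam.parts.toList.get i - r)
          else (2 : ℚ) ^ (lam.parts.toList.get i))
        = (if i = j
            then 2 * ((lam.parts.toList.get i).choose r : ℚ) * 2 ^ (lam.parts.toList.get i - r)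
              * ((2 : ℚ) ^ (lam.parts.toList.get i))⁻¹
            else 1) * (2 : ℚ) ^ (lam.parts.toList.get i) := by
      intro i
      by_cases h : i = j
      · rw [if_pos h, if_pos h]
        have : (2 : ℚ) ^ (lam.parts.toList.get i) ≠ 0 := by positivity
        field_simp
      · rw [if_neg h, if_neg h, one_mul]
    rw [Finset.prod_congr rfl fun i _ => h2 i, Finset.prod_mul_distrib,
      Finset.prod_ite_eq' Finset.univ j, if_pos (Finset.mem_univ j),
      Finset.prod_pow_eq_pow_sum, hLsum]
  have hmain := hswap2.trans (Finset.sum_congr rfl fun j _ => hfactor j)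
  rw [hmain]
  -- Step 5: final arithmetic.
  rw [Finset.mul_sum, Finset.mul_sum]
  refine Finset.sum_congr rfl fun j _ => ?_
  set m : ℕ := lam.parts.toList.get j with hm
  have h2 : (2 : ℚ) ^ ((1 : ℤ) - (r : ℤ)) = 2 / 2 ^ r := by
    rw [zpow_sub₀ (by norm_num : (2 : ℚ) ≠ 0), zpow_one, zpow_natCast]
  rcases lt_or_ge m r with h | h
  · rw [Nat.choose_eq_zero_of_lt h]
    push_cast
    ring
  · have hmr : (2 : ℚ) ^ m = 2 ^ (m - r) * 2 ^ r := by
      rw [← pow_add]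
      congr 1
      omega
    have e1 : (2 : ℚ) ^ (m - r) ≠ 0 := by positivity
    have e2 : (2 : ℚ) ^ r ≠ 0 := by positivity
    have e3 : (2 : ℚ) ^ n ≠ 0 := by positivity
    rw [h2, hmr]
    field_simp
end

section
/- For every n ≥ 1 and every k ≥ 0, the rock-breaking chain started at the one-part partition (n) fails to be absorbed at 1^n after k steps with probability at most C(n,2)/2^k; that is, 1 − P_n^k((n), 1^n) ≤ C(n,2)/2^k. -/
open scoped Classical



theorem sumCC (m : ℕ) : ∑ a ∈ Finset.range (m+1), m.choose a * a.choose 2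
    = m.choose 2 * 2 ^ (m - 2) := by
  match m with
  | 0 => decide
  | 1 => decide
  | (m+2) =>
    rw [Finset.sum_range_succ', Finset.sum_range_succ']
    simp only [Nat.choose_zero_right]
    have : ∀ b ∈ Finset.range (m+1), (m+2).choose (b+1+1) * (b+1+1).choose 2
        = (m+2).choose 2 * m.choose b := by
      intro b hb
      simp only [Finset.mem_range] at hb
      rw [Nat.choose_mul (by omega : 2 ≤ b+1+1)]
      simp
    rw [Finset.sum_congr rfl this, ← Finset.mul_sum, Nat.sum_range_choose]
    simp

theorem sumCC' (m : ℕ) : ∑ a ∈ Finset.range (m+1), m.choose a * (m - a).choose 2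
    = m.choose 2 * 2 ^ (m - 2) := by
  rw [← sumCC m, ← Finset.sum_range_reflect]
  refine Finset.sum_congr rfl fun a ha => ?_
  simp only [Finset.mem_range] at ha
  have h1 : m + 1 - 1 - a = m - a := by omega
  rw [h1, Nat.sub_sub_self (by omega : a ≤ m), Nat.choose_symm (by omega : a ≤ m)]

theorem keyQ (m : ℕ) : ∑ a : Fin (m+1), (m.choose a : ℚ) * ((a:ℕ).choose 2 + (m - a).choose 2)
    = 2 ^ m * (m.choose 2 : ℚ) / 2 := by
  rw [Fin.sum_univ_eq_sum_range
    (fun a => (m.choose a : ℚ) * ((a.choose 2 : ℚ) + ((m - a).choose 2 : ℚ)))]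
  have : ∑ a ∈ Finset.range (m+1), (m.choose a : ℚ) * ((a.choose 2 : ℚ) + ((m - a).choose 2 : ℚ))
      = ((∑ a ∈ Finset.range (m+1), (m.choose a * a.choose 2 + m.choose a * (m-a).choose 2) : ℕ) : ℚ) := by
    push_cast
    refine Finset.sum_congr rfl fun a _ => by ring
  rw [this, Finset.sum_add_distrib, sumCC, sumCC']
  match m with
  | 0 => norm_num
  | 1 => norm_num
  | (m+2) =>
    push_cast
    have : (2:ℚ) ^ (m+2) = 2 ^ m * 2 * 2 := by ring
    rw [this]; ring

theorem sumC (m : ℕ) : ∑ a : Fin (m+1), (m.choose a : ℚ) = 2 ^ m := by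
  rw [Fin.sum_univ_eq_sum_range (fun a => (m.choose a : ℚ)),
    show ∑ a ∈ Finset.range (m+1), (m.choose a : ℚ)
      = ((∑ a ∈ Finset.range (m+1), m.choose a : ℕ) : ℚ) by push_cast; rfl,
    Nat.sum_range_choose]
  push_cast; rfl

lemma filter_ne_zero_map_sum {M : Type*} [AddCommMonoid M] (g : ℕ → M) (hg : g 0 = 0)
    (A : Multiset ℕ) : ((A.filter (fun x => x ≠ 0)).map g).sum = (A.map g).sum := by
  induction A using Multiset.induction_on with
  | empty => simp
  | cons a A ih =>
    rw [Multiset.filter_cons]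
    by_cases h : a = 0
    · simp [h, hg, ih]
    · simp [h, ih]

lemma filter_ne_zero_sum (A : Multiset ℕ) :
    (A.filter (fun x => x ≠ 0)).sum = A.sum := by
  have := filter_ne_zero_map_sum id rfl A
  simpa using this

section
variable {n : ℕ} (lam : Nat.Partition n)
  (s : (j : Fin lam.parts.toList.length) → Fin (lam.parts.toList.get j + 1))

noncomputable def resM : Multiset ℕ :=
  ((↑(List.ofFn fun j => (s j : ℕ)) +
      ↑(List.ofFn fun j => lam.parts.toList.get j - (s j : ℕ)) : Multiset ℕ).filter
      (fun x => x ≠ 0))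

lemma sum_fin_get : ∑ j : Fin lam.parts.toList.length, lam.parts.toList.get j = n := by
  have h : (List.ofFn lam.parts.toList.get).sum = lam.parts.toList.sum := by
    rw [List.ofFn_get]
  rw [List.sum_ofFn] at h
  rw [h, Multiset.sum_toList]
  exact lam.parts_sum

lemma resM_sum : (resM lam s).sum = n := by
  rw [resM, filter_ne_zero_sum, Multiset.sum_add]
  simp only [Multiset.sum_coe, List.sum_ofFn]
  rw [← Finset.sum_add_distrib]
  have h : ∀ j, (s j : ℕ) + (lam.parts.toList.get j - (s j : ℕ)) = lam.parts.toList.get j :=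
    fun j => by have := (s j).is_le; omega
  simp only [h]
  exact sum_fin_get lam

lemma resM_pos : ∀ i ∈ resM lam s, 0 < i := by
  intro i hi
  have := Multiset.of_mem_filter hi
  omega

noncomputable def resPart : Nat.Partition n :=
  ⟨resM lam s, fun {i} hi => resM_pos lam s i hi, resM_sum lam s⟩

end

-- list sum as Fin sum
lemma list_map_sum_fin {M : Type*} [AddCommMonoid M] (l : List ℕ) (g : ℕ → M) :
    (l.map g).sum = ∑ j : Fin l.length, g (l.get j) := by
  have h1 : l.map g = List.ofFn (fun j => g (l.get j)) := by
    conv_lhs => rw [← List.ofFn_get l, List.map_ofFn]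
    rfl
  rw [h1, List.sum_ofFn]

noncomputable def fw {n : ℕ} (mu : Nat.Partition n) : ℚ :=
  ((mu.parts.map (fun x => x.choose 2)).sum : ℕ)

lemma fw_nonneg {n : ℕ} (mu : Nat.Partition n) : 0 ≤ fw mu := by
  rw [fw]; positivity

lemma fw_eq_sum_fin {n : ℕ} (lam : Nat.Partition n) :
    fw lam = ∑ j : Fin lam.parts.toList.length, ((lam.parts.toList.get j).choose 2 : ℚ) := by
  rw [fw]
  conv_lhs => rw [← Multiset.coe_toList lam.parts]
  rw [Multiset.map_coe, Multiset.sum_coe, list_map_sum_fin]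
  push_cast
  rfl

lemma fw_resPart {n : ℕ} (lam : Nat.Partition n)
    (s : (j : Fin lam.parts.toList.length) → Fin (lam.parts.toList.get j + 1)) :
    fw (resPart lam s) = ∑ j : Fin lam.parts.toList.length,
      (((s j : ℕ).choose 2 : ℚ) + ((lam.parts.toList.get j - (s j : ℕ)).choose 2 : ℚ)) := by
  rw [fw]
  have h : (resPart lam s).parts = resM lam s := rfl
  rw [h, resM, filter_ne_zero_map_sum _ rfl, Multiset.map_add, Multiset.sum_add,
    Multiset.map_coe, Multiset.map_coe, Multiset.sum_coe, Multiset.sum_coe,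
    List.map_ofFn, List.map_ofFn, List.sum_ofFn, List.sum_ofFn]
  push_cast
  rw [Finset.sum_add_distrib]
  rfl

open Finset in
lemma pi_sum_prod {ι : Type*} [Fintype ι] [DecidableEq ι] {κ : ι → Type*} [∀ i, Fintype (κ i)]
    (g : ∀ i, κ i → ℚ) :
    ∑ s : (∀ i, κ i), ∏ j, g j (s j) = ∏ j, ∑ a, g j a :=
  (Fintype.prod_sum g).symm

open Finset in
lemma pi_sum_prod_mul_sum {ι : Type*} [Fintype ι] [DecidableEq ι] {κ : ι → Type*}
    [∀ i, Fintype (κ i)] (g : ∀ i, κ i → ℚ) (h : ∀ i, κ i → ℚ) :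
    ∑ s : (∀ i, κ i), (∏ j, g j (s j)) * (∑ i, h i (s i)) =
    ∑ i, (∑ a, g i a * h i a) * ∏ j ∈ Finset.univ.erase i, (∑ a, g j a) := by
  have key : ∀ i : ι, ∑ s : (∀ i, κ i), (∏ j, g j (s j)) * h i (s i)
      = (∑ a, g i a * h i a) * ∏ j ∈ Finset.univ.erase i, (∑ a, g j a) := by
    intro i
    have h1 : ∀ s : (∀ i, κ i), (∏ j, g j (s j)) * h i (s i)
        = ∏ j, (g j (s j) * if j = i then h j (s j) else 1) := by
      intro s
      rw [Finset.prod_mul_distrib, Finset.prod_ite_eq' Finset.univ i (fun j => h j (s j))]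
      simp
    simp only [h1]
    rw [show (∑ s : (∀ i, κ i), ∏ j, (g j (s j) * if j = i then h j (s j) else 1))
        = ∏ j, ∑ a, (g j a * if j = i then h j a else 1) from
      (Fintype.prod_sum (fun j a => g j a * if j = i then h j a else 1)).symm]
    rw [← Finset.mul_prod_erase Finset.univ _ (Finset.mem_univ i)]
    congr 1
    · simp
    · refine Finset.prod_congr rfl fun j hj => ?_
      have : j ≠ i := (Finset.mem_erase.mp hj).1
      simp [this]
  calc ∑ s : (∀ i, κ i), (∏ j, g j (s j)) * (∑ i, h i (s i))
      = ∑ s : (∀ i, κ i), ∑ i, (∏ j, g j (s j)) * h i (s i) := by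
        refine Finset.sum_congr rfl fun s _ => Finset.mul_sum _ _ _
    _ = ∑ i, ∑ s : (∀ i, κ i), (∏ j, g j (s j)) * h i (s i) := Finset.sum_comm
    _ = _ := Finset.sum_congr rfl fun i _ => key i


/-- The partition `1^n` of `n` into `n` ones. -/
def onesPartition (n : ℕ) : Nat.Partition n :=
  ⟨Multiset.replicate n 1, by
    intro i hi
    rw [Multiset.eq_of_mem_replicate hi]
    exact Nat.one_pos, by simp⟩

lemma rockP_nonneg (n : ℕ) (lam mu : Nat.Partition n) : 0 ≤ rockP n lam mu := by
  rw [rockP]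
  apply mul_nonneg (by positivity)
  apply Finset.sum_nonneg
  intro s _
  split
  · positivity
  · exact le_refl 0

lemma rockP_sum_collapse {n : ℕ} (lam : Nat.Partition n) (w : Nat.Partition n → ℚ) :
    ∑ mu : Nat.Partition n, rockP n lam mu * w mu
      = ((2:ℚ)^n)⁻¹ * ∑ s : ((j : Fin lam.parts.toList.length) → Fin (lam.parts.toList.get j + 1)),
          (∏ j, ((lam.parts.toList.get j).choose (s j) : ℚ)) * w (resPart lam s) := by
  unfold rockP
  simp only [mul_assoc]
  rw [← Finset.mul_sum]
  congr 1
  simp only [Finset.sum_mul]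
  rw [Finset.sum_comm]
  refine Finset.sum_congr rfl fun s _ => ?_
  have hcond : ∀ mu : Nat.Partition n,
      (((↑(List.ofFn fun j => (s j : ℕ)) +
            ↑(List.ofFn fun j => lam.parts.toList.get j - (s j : ℕ)) : Multiset ℕ).filter
            (fun x => x ≠ 0)) = mu.parts) = (resPart lam s = mu) := by
    intro mu
    apply propext
    constructor
    · intro h
      exact Nat.Partition.ext h
    · intro h
      rw [← h]
      rfl
  simp only [hcond]
  simp [Finset.sum_ite_eq]

lemma rockP_rowsum {n : ℕ} (lam : Nat.Partition n) :
    ∑ mu : Nat.Partition n, rockP n lam mu = 1 := by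
  have h := rockP_sum_collapse lam (fun _ => 1)
  simp only [mul_one] at h
  rw [h, pi_sum_prod (κ := fun j => Fin (lam.parts.toList.get j + 1)) (fun j a => ((lam.parts.toList.get j).choose a : ℚ))]
  have h2 : ∀ j, ∑ a : Fin (lam.parts.toList.get j + 1),
      ((lam.parts.toList.get j).choose a : ℚ) = 2 ^ (lam.parts.toList.get j) :=
    fun j => sumC _
  rw [Finset.prod_congr rfl (fun j _ => h2 j), Finset.prod_pow_eq_pow_sum, sum_fin_get]
  simp

lemma rockP_eigen {n : ℕ} (lam : Nat.Partition n) :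
    ∑ mu : Nat.Partition n, rockP n lam mu * fw mu = fw lam / 2 := by
  rw [rockP_sum_collapse lam fw]
  have h1 : ∀ s : ((j : Fin lam.parts.toList.length) → Fin (lam.parts.toList.get j + 1)),
      (∏ j, ((lam.parts.toList.get j).choose (s j) : ℚ)) * fw (resPart lam s)
      = (∏ j, ((lam.parts.toList.get j).choose (s j) : ℚ)) *
        (∑ i, (((s i : ℕ).choose 2 : ℚ) + ((lam.parts.toList.get i - (s i : ℕ)).choose 2 : ℚ))) := by
    intro s; rw [fw_resPart]
  rw [Finset.sum_congr rfl (fun s _ => h1 s)]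
  rw [pi_sum_prod_mul_sum (κ := fun j => Fin (lam.parts.toList.get j + 1)) (fun j a => ((lam.parts.toList.get j).choose a : ℚ))
    (fun i a => (((a : ℕ).choose 2 : ℚ) + ((lam.parts.toList.get i - (a : ℕ)).choose 2 : ℚ)))]
  have h2 : ∀ j, ∑ a : Fin (lam.parts.toList.get j + 1),
      ((lam.parts.toList.get j).choose a : ℚ) = 2 ^ (lam.parts.toList.get j) :=
    fun j => sumC _
  have h3 : ∀ i, (∑ a : Fin (lam.parts.toList.get i + 1),
      ((lam.parts.toList.get i).choose a : ℚ) *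
        (((a : ℕ).choose 2 : ℚ) + ((lam.parts.toList.get i - (a : ℕ)).choose 2 : ℚ)))
      = 2 ^ (lam.parts.toList.get i) * ((lam.parts.toList.get i).choose 2 : ℚ) / 2 :=
    fun i => keyQ _
  have h4 : ∀ i : Fin lam.parts.toList.length,
      (∑ a : Fin (lam.parts.toList.get i + 1), ((lam.parts.toList.get i).choose a : ℚ) *
        (((a : ℕ).choose 2 : ℚ) + ((lam.parts.toList.get i - (a : ℕ)).choose 2 : ℚ))) *
      ∏ j ∈ Finset.univ.erase i, (∑ a : Fin (lam.parts.toList.get j + 1), ((lam.parts.toList.get j).choose a : ℚ))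
      = ((lam.parts.toList.get i).choose 2 : ℚ) / 2 *
        ∏ j, (2:ℚ) ^ (lam.parts.toList.get j) := by
    intro i
    rw [h3 i, Finset.prod_congr rfl (fun j _ => h2 j),
      ← Finset.mul_prod_erase Finset.univ (fun j => (2:ℚ) ^ (lam.parts.toList.get j))
        (Finset.mem_univ i)]
    ring
  rw [Finset.sum_congr rfl (fun i _ => h4 i), ← Finset.sum_mul,
    Finset.prod_pow_eq_pow_sum, sum_fin_get]
  rw [fw_eq_sum_fin]
  have : (2:ℚ) ^ n ≠ 0 := by positivity
  field_simp
  rw [← Finset.sum_div, mul_div_cancel₀]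
  norm_num

lemma rockMatrix_apply (n : ℕ) (lam mu : Nat.Partition n) :
    rockMatrix n lam mu = rockP n lam mu := rfl

lemma rockMatrix_pow_nonneg (n k : ℕ) (lam mu : Nat.Partition n) :
    0 ≤ (rockMatrix n ^ k) lam mu := by
  induction k generalizing lam mu with
  | zero =>
    simp only [pow_zero]
    rw [Matrix.one_apply]
    split <;> norm_num
  | succ k ih =>
    rw [pow_succ, Matrix.mul_apply]
    simp only [rockMatrix_apply]
    exact Finset.sum_nonneg fun nu _ => mul_nonneg (ih lam nu) (rockP_nonneg n nu mu)

lemma rockMatrix_pow_rowsum (n k : ℕ) (lam : Nat.Partition n) :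
    ∑ mu : Nat.Partition n, (rockMatrix n ^ k) lam mu = 1 := by
  induction k generalizing lam with
  | zero =>
    simp only [pow_zero]
    simp [Matrix.one_apply]
  | succ k ih =>
    simp only [pow_succ, Matrix.mul_apply, rockMatrix_apply]
    rw [Finset.sum_comm]
    rw [Finset.sum_congr rfl fun nu _ => by
      rw [← Finset.mul_sum, (rockP_rowsum nu : ∑ mu, rockP n nu mu = 1), mul_one]]
    exact ih lam

lemma rockMatrix_pow_eigen (n k : ℕ) (lam : Nat.Partition n) :
    ∑ mu : Nat.Partition n, (rockMatrix n ^ k) lam mu * fw mu = fw lam / 2 ^ k := by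
  induction k generalizing lam with
  | zero =>
    simp [Matrix.one_apply, Finset.sum_ite_eq]
  | succ k ih =>
    simp only [pow_succ, Matrix.mul_apply, Finset.sum_mul, rockMatrix_apply]
    rw [Finset.sum_comm]
    rw [Finset.sum_congr rfl fun nu _ => by
      rw [Finset.sum_congr rfl fun mu _ => (mul_assoc _ _ _),
        ← Finset.mul_sum, (rockP_eigen nu : ∑ mu, rockP n nu mu * fw mu = fw nu / 2)]]
    have : ∀ nu : Nat.Partition n, (rockMatrix n ^ k) lam nu * (fw nu / 2)
        = ((rockMatrix n ^ k) lam nu * fw nu) / 2 := fun nu => by ring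
    rw [Finset.sum_congr rfl fun nu _ => this nu, ← Finset.sum_div, ih lam]
    rw [div_div]

lemma fw_ones (n : ℕ) : fw (onesPartition n) = 0 := by
  rw [fw]
  have : (onesPartition n).parts = Multiset.replicate n 1 := rfl
  rw [this, Multiset.map_replicate]
  simp

lemma fw_indiscrete (n : ℕ) (hn : 1 ≤ n) : fw (Nat.Partition.indiscrete n) = n.choose 2 := by
  rw [fw, Nat.Partition.indiscrete_parts (by omega)]
  simp

lemma one_le_fw {n : ℕ} (mu : Nat.Partition n) (h : mu ≠ onesPartition n) : 1 ≤ fw mu := by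
  by_cases hall : ∀ x ∈ mu.parts, x = 1
  · exfalso
    apply h
    apply Nat.Partition.ext
    have hrep : mu.parts = Multiset.replicate (Multiset.card mu.parts) 1 :=
      Multiset.eq_replicate.mpr ⟨rfl, hall⟩
    have hcard : Multiset.card mu.parts = n := by
      have := mu.parts_sum
      rw [hrep] at this
      simpa using this
    rw [hrep, hcard]
    rfl
  · push_neg at hall
    obtain ⟨x, hx, hx1⟩ := hall
    have hx2 : 2 ≤ x := by
      have := mu.parts_pos hx
      omega
    have hmem : x.choose 2 ∈ mu.parts.map (fun y => y.choose 2) :=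
      Multiset.mem_map_of_mem _ hx
    have hle : x.choose 2 ≤ (mu.parts.map (fun y => y.choose 2)).sum :=
      Multiset.single_le_sum (fun y _ => Nat.zero_le y) _ hmem
    have hpos : 1 ≤ x.choose 2 := Nat.choose_pos hx2
    rw [fw]
    exact_mod_cast le_trans hpos hle


/-- After `k` steps from the one-part partition `(n)`, the rock-breaking chain fails to
be absorbed at `1^n` with probability at most `C(n,2)/2^k`. -/
theorem rockBreaking_absorption_bound (n : ℕ) (hn : 1 ≤ n) (k : ℕ) :
    1 - (rockMatrix n ^ k) (Nat.Partition.indiscrete n) (onesPartition n) ≤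
      (n.choose 2 : ℚ) / 2 ^ k := by
  set A := fun mu => (rockMatrix n ^ k) (Nat.Partition.indiscrete n) mu with hA
  have h1 : ∑ mu ∈ Finset.univ.erase (onesPartition n), A mu
      = 1 - A (onesPartition n) := by
    have := Finset.sum_erase_add Finset.univ A (Finset.mem_univ (onesPartition n))
    rw [← rockMatrix_pow_rowsum n k (Nat.Partition.indiscrete n)] at *
    linarith [this]
  rw [← h1]
  have h2 : ∑ mu ∈ Finset.univ.erase (onesPartition n), A mu
      ≤ ∑ mu ∈ Finset.univ.erase (onesPartition n), A mu * fw mu := by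
    refine Finset.sum_le_sum fun mu hmu => ?_
    have hne : mu ≠ onesPartition n := (Finset.mem_erase.mp hmu).1
    exact le_mul_of_one_le_right (rockMatrix_pow_nonneg n k _ mu) (one_le_fw mu hne)
  have h3 : ∑ mu ∈ Finset.univ.erase (onesPartition n), A mu * fw mu
      ≤ ∑ mu : Nat.Partition n, A mu * fw mu := by
    refine Finset.sum_le_sum_of_subset_of_nonneg (Finset.erase_subset _ _) ?_
    intro mu _ _
    exact mul_nonneg (rockMatrix_pow_nonneg n k _ mu) (fw_nonneg mu)
  have h4 : ∑ mu : Nat.Partition n, A mu * fw mu = (n.choose 2 : ℚ) / 2 ^ k := by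
    rw [hA]
    rw [rockMatrix_pow_eigen n k (Nat.Partition.indiscrete n), fw_indiscrete n hn]
  linarith
end

section
/- Fix n ≥ 1 and a partition λ of n. Define, for each partition μ of n, g_λ(μ) = (∏_{j=1}^{l(λ)} λ_j!) · ( (−1)^{l(μ)−l(λ)} / ∏_{s=1}^{l(μ)} μ_s! ) · Σ ∏_{j=1}^{l(λ)} ( (l(μ^j) − 1)! / ∏_{i≥1} a_i(μ^j)! ), the sum being over all tuples (μ^1, …, μ^{l(λ)}) of partitions such that μ^j is a partition of λ_j and the multiset union μ^1 ⊔ ⋯ ⊔ μ^{l(λ)} equals μ. Then g_λ is a left eigenfunction of the rock-breaking chain with eigenvalue 2^{l(λ)−n}: for every partition ρ of n, Σ_μ g_λ(μ) P_n(μ, ρ) = 2^{l(λ)−n} g_λ(ρ). Moreover g_λ(μ) = 0 unless μ is a refinement of λ. -/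
open scoped Classical

/-- `mu` refines `lam` if the parts of `mu` may be grouped into blocks whose sums are
the parts of `lam`. -/
def PartitionRefines (n : ℕ) (mu lam : Nat.Partition n) : Prop :=
  ∃ t : ((j : Fin lam.parts.toList.length) → Nat.Partition (lam.parts.toList.get j)),
    (∑ j, (t j).parts) = mu.parts

/-- The left eigenfunction `g_λ` of the rock-breaking chain:
`g_λ(μ) = (∏_j λ_j!) · ((−1)^{l(μ)−l(λ)}/∏_s μ_s!) · Σ ∏_j ((l(μ^j)−1)!/∏_i a_i(μ^j)!)`,
the sum being over all tuples `(μ^1, …, μ^{l(λ)})` of partitions with `μ^j ⊢ λ_j` and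
multiset union `μ`. -/
noncomputable def rockG (n : ℕ) (lam mu : Nat.Partition n) : ℚ :=
  (lam.parts.map fun j => (j.factorial : ℚ)).prod *
    ((-1 : ℚ) ^ (Multiset.card mu.parts - Multiset.card lam.parts) /
      (mu.parts.map fun s => (s.factorial : ℚ)).prod) *
    ∑ t : ((j : Fin lam.parts.toList.length) → Nat.Partition (lam.parts.toList.get j)),
      if (∑ j, (t j).parts) = mu.parts then
        ∏ j, (((Multiset.card (t j).parts - 1).factorial : ℚ) /
          ∏ i ∈ Finset.range (n + 1), (((t j).parts.count i).factorial : ℚ))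
      else 0

noncomputable section RBaux

open MvPolynomial Finset


/-- ambient polynomial ring -/
abbrev RBR : Type := MvPolynomial ℕ ℚ

/-- variables, with `X' 0 = 1` -/
def RBX (j : ℕ) : RBR := if j = 0 then 1 else MvPolynomial.X j

/-- monomial attached to a multiset of (positive) integers -/
def rbxm (m : Multiset ℕ) : RBR := (m.map MvPolynomial.X).prod

lemma rbxm_add (a b : Multiset ℕ) : rbxm (a + b) = rbxm a * rbxm b := by
  simp [rbxm, Multiset.prod_add]

lemma rbxm_eq_monomial (m : Multiset ℕ) :
    rbxm m = MvPolynomial.monomial (Multiset.toFinsupp m) 1 := by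
  induction m using Multiset.induction_on with
  | empty => simp [rbxm]
  | cons a s ih =>
      rw [show (a ::ₘ s) = ({a} + s) from by simp, rbxm_add, ih]
      rw [show rbxm {a} = MvPolynomial.X a from by simp [rbxm]]
      rw [MvPolynomial.X, MvPolynomial.monomial_mul]
      simp [add_comm]

lemma coeff_rbxm (m m' : Multiset ℕ) :
    MvPolynomial.coeff (Multiset.toFinsupp m') (rbxm m) = if m = m' then 1 else 0 := by
  rw [rbxm_eq_monomial, MvPolynomial.coeff_monomial]
  by_cases h : m = m'
  · simp [h]
  · rw [if_neg h, if_neg (fun hc => h (Multiset.toFinsupp.injective hc))]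

/-- extraction of coefficients from partition-indexed expansions -/
lemma coeff_partition_sum (n : ℕ) (h : Nat.Partition n → ℚ) (rho : Nat.Partition n) :
    MvPolynomial.coeff (Multiset.toFinsupp rho.parts)
      (∑ mu : Nat.Partition n, h mu • rbxm mu.parts) = h rho := by
  rw [MvPolynomial.coeff_sum]
  have : ∀ mu : Nat.Partition n,
      MvPolynomial.coeff (Multiset.toFinsupp rho.parts) (h mu • rbxm mu.parts)
        = if mu = rho then h mu else 0 := by
    intro mu
    rw [MvPolynomial.coeff_smul, coeff_rbxm]
    by_cases hh : mu = rho
    · simp [hh]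
    · rw [if_neg (fun hc => hh (Nat.Partition.ext hc)), if_neg hh, smul_zero]
  rw [Finset.sum_congr rfl (fun mu _ => this mu), Finset.sum_ite_eq' Finset.univ rho h]
  simp

/-- the Hopf-square map -/
def rbpsi : RBR →ₐ[ℚ] RBR :=
  MvPolynomial.aeval (fun k => ∑ j ∈ Finset.range (k + 1),
    ((k.choose j : ℚ)) • (RBX j * RBX (k - j)))

lemma rbpsi_X (k : ℕ) : rbpsi (MvPolynomial.X k)
    = ∑ j ∈ Finset.range (k + 1), ((k.choose j : ℚ)) • (RBX j * RBX (k - j)) := by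
  simp [rbpsi]


def rbc (n : ℕ) (m : Multiset ℕ) : ℚ :=
  (-1 : ℚ) ^ (Multiset.card m - 1) / (m.map fun s => (s.factorial : ℚ)).prod *
    (((Multiset.card m - 1).factorial : ℚ) /
      ∏ i ∈ Finset.range (n + 1), ((m.count i).factorial : ℚ))

lemma rbF_ne_zero (m : Multiset ℕ) : (m.map fun s => ((s.factorial : ℚ))).prod ≠ 0 := by
  apply Multiset.prod_ne_zero
  intro h
  obtain ⟨y, _, hy⟩ := Multiset.mem_map.1 h
  exact (Nat.cast_ne_zero.2 y.factorial_ne_zero) hy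

lemma rbA_ne_zero (n : ℕ) (m : Multiset ℕ) :
    (∏ i ∈ Finset.range (n+1), ((m.count i).factorial : ℚ)) ≠ 0 := by
  apply Finset.prod_ne_zero_iff.2
  intro i _
  positivity

lemma rbc_singleton (n k : ℕ) : rbc n {k} = ((k.factorial : ℚ))⁻¹ := by
  have hA : ∏ i ∈ Finset.range (n+1), ((({k} : Multiset ℕ).count i).factorial : ℚ) = 1 := by
    apply Finset.prod_eq_one
    intro i _
    rw [Multiset.count_singleton]
    split <;> simp
  rw [rbc, hA]
  simp

lemma multiset_sum_map_sub (σ : Multiset ℕ) (k : ℚ) :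
    (σ.map fun s : ℕ => k - (s : ℚ)).sum
      = (Multiset.card σ : ℚ) * k - ((σ.sum : ℕ) : ℚ) := by
  induction σ using Multiset.induction_on with
  | empty => simp
  | cons a s ih =>
      simp only [Multiset.map_cons, Multiset.sum_cons, Multiset.card_cons, ih]
      push_cast
      ring

lemma rbc_rec (n k : ℕ) (hk : 1 ≤ k) (hkn : k ≤ n) (σ : Multiset ℕ)
    (hpos : ∀ i ∈ σ, 0 < i) (hsum : σ.sum = k) :
    (k : ℚ) * rbc n σ +
      ∑ j ∈ Finset.Ioo 0 k,
        (if j ∈ σ then ((k : ℚ) - j) / (j.factorial : ℚ) * rbc n (σ.erase j) else 0)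
      = if σ = {k} then (k : ℚ) / (k.factorial : ℚ) else 0 := by
  by_cases hσ : σ = {k}
  · subst hσ
    rw [if_pos rfl, Finset.sum_eq_zero, add_zero, rbc_singleton]
    · field_simp
    · intro j hj
      rw [if_neg]
      intro hmem
      have := Multiset.mem_singleton.1 hmem
      have := (Finset.mem_Ioo.1 hj).2
      omega
  · rw [if_neg hσ]
    -- card σ ≥ 2
    have hcard : 2 ≤ Multiset.card σ := by
      have h1 : σ ≠ 0 := by
        intro h; subst h; simp at hsum; omega
      have hc1 : 1 ≤ Multiset.card σ := Multiset.card_pos.2 h1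
      by_contra h
      push_neg at h
      have hc2 : Multiset.card σ = 1 := by omega
      obtain ⟨a, ha⟩ := Multiset.card_eq_one.1 hc2
      subst ha
      simp at hsum
      exact hσ (by rw [hsum])
    obtain ⟨l2, hl2⟩ : ∃ l2, Multiset.card σ = l2 + 2 := ⟨Multiset.card σ - 2, by omega⟩
    set F := (σ.map fun s => ((s.factorial : ℚ))).prod with hF
    set A := ∏ i ∈ Finset.range (n+1), ((σ.count i).factorial : ℚ) with hA
    have hF0 : F ≠ 0 := rbF_ne_zero σ
    have hA0 : A ≠ 0 := rbA_ne_zero n σ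
    have hjlt : ∀ j ∈ σ, j < k := by
      intro j hj
      have hc : 0 < Multiset.card (σ.erase j) := by
        rw [Multiset.card_erase_of_mem hj, hl2]
        exact Nat.succ_pos _
      obtain ⟨b, hb⟩ := Multiset.card_pos_iff_exists_mem.1 hc
      have hbpos : 0 < b := hpos b (Multiset.mem_of_mem_erase hb)
      have hb2 : b + ((σ.erase j).erase b).sum = (σ.erase j).sum := by
        conv_rhs => rw [← Multiset.cons_erase hb]
        simp
      have hj2 : j + (σ.erase j).sum = k := by
        conv_rhs => rw [← hsum, ← Multiset.cons_erase hj]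
        simp
      omega
    -- rewrite sum over Ioo as sum over toFinset
    have hsub : σ.toFinset ⊆ Finset.Ioo 0 k := by
      intro j hj
      rw [Multiset.mem_toFinset] at hj
      exact Finset.mem_Ioo.2 ⟨hpos j hj, hjlt j hj⟩
    have hstep : ∑ j ∈ Finset.Ioo 0 k,
        (if j ∈ σ then ((k : ℚ) - j) / (j.factorial : ℚ) * rbc n (σ.erase j) else 0)
        = ∑ j ∈ σ.toFinset, ((k : ℚ) - j) / (j.factorial : ℚ) * rbc n (σ.erase j) := by
      rw [← Finset.sum_filter]
      apply Finset.sum_congr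
      · ext j
        simp only [Finset.mem_filter, Finset.mem_Ioo, Multiset.mem_toFinset]
        constructor
        · rintro ⟨_, h⟩; exact h
        · intro h; exact ⟨⟨hpos j h, hjlt j h⟩, h⟩
      · intro _ _; rfl
    rw [hstep]
    -- compute rbc of erase
    have herase : ∀ j ∈ σ.toFinset,
        ((k : ℚ) - j) / (j.factorial : ℚ) * rbc n (σ.erase j)
          = ((k : ℚ) - j) * (σ.count j : ℚ) * ((-1 : ℚ)^l2 * (l2.factorial : ℚ)) / (F * A) := by
      intro j hjf
      have hj : j ∈ σ := Multiset.mem_toFinset.1 hjf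
      have hcount : 0 < σ.count j := Multiset.count_pos.2 hj
      have hcarde : Multiset.card (σ.erase j) = l2 + 1 := by
        rw [Multiset.card_erase_of_mem hj, hl2]
        rfl
      have hFe : ((σ.erase j).map fun s => ((s.factorial : ℚ))).prod
          = F / (j.factorial : ℚ) := by
        rw [eq_div_iff (by positivity), mul_comm, hF]
        exact Multiset.prod_map_erase (f := fun s => ((s.factorial : ℚ))) hj
      have hjr : j ∈ Finset.range (n + 1) := Finset.mem_range.2 (by
        have := hjlt j hj; omega)
      have hAe : (∏ i ∈ Finset.range (n+1), (((σ.erase j).count i).factorial : ℚ))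
          = A / (σ.count j : ℚ) := by
        rw [eq_div_iff (by exact_mod_cast hcount.ne')]
        rw [← Finset.mul_prod_erase _ _ hjr]
        conv_rhs => rw [hA, ← Finset.mul_prod_erase _ _ hjr]
        rw [Finset.prod_congr rfl (fun i hi =>
          by rw [Multiset.count_erase_of_ne (Finset.mem_erase.1 hi).1])]
        rw [Multiset.count_erase_self]
        have : (((σ.count j - 1).factorial : ℚ)) * (σ.count j : ℚ) = ((σ.count j).factorial : ℚ) := by
          rw [← Nat.cast_mul, mul_comm, Nat.mul_factorial_pred hcount.ne']
        rw [mul_assoc, mul_comm _ (σ.count j : ℚ), ← mul_assoc, this]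
      rw [rbc, hcarde, hFe, hAe]
      have h1 : l2 + 1 - 1 = l2 := by omega
      rw [h1]
      have hj0 : ((j.factorial : ℚ)) ≠ 0 := by positivity
      have hc0 : ((σ.count j : ℚ)) ≠ 0 := by exact_mod_cast hcount.ne'
      field_simp
    rw [Finset.sum_congr rfl herase]
    -- sum over parts
    have hsum2 : ∑ j ∈ σ.toFinset, ((k : ℚ) - j) * (σ.count j : ℚ) * ((-1 : ℚ)^l2 * (l2.factorial : ℚ)) / (F * A)
        = ((l2 : ℚ) + 1) * k * ((-1 : ℚ)^l2 * (l2.factorial : ℚ)) / (F * A) := by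
      rw [← Finset.sum_div]
      congr 1
      rw [← Finset.sum_mul]
      congr 1
      have hmc : ∑ j ∈ σ.toFinset, σ.count j • ((k : ℚ) - j)
          = (σ.map fun s : ℕ => ((k : ℚ) - (s : ℚ))).sum :=
        (Finset.sum_multiset_map_count σ _).symm
      have e1 : ∑ j ∈ σ.toFinset, ((k : ℚ) - j) * (σ.count j : ℚ)
          = ∑ j ∈ σ.toFinset, σ.count j • ((k : ℚ) - j) := by
        apply Finset.sum_congr rfl
        intro j _
        rw [nsmul_eq_mul, mul_comm]
      rw [e1, hmc, multiset_sum_map_sub σ (k : ℚ), hsum, hl2]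
      push_cast
      ring
    rw [hsum2, rbc, hl2]
    have h2 : l2 + 2 - 1 = l2 + 1 := by omega
    rw [h2, ← hF, ← hA]
    rw [Nat.factorial_succ, pow_succ]
    push_cast
    field_simp
    ring

lemma partition_insert_bij {M : Type*} [AddCommMonoid M] (k j : ℕ) (hj0 : 0 < j) (hjk : j ≤ k)
    (F : Multiset ℕ → M) :
    ∑ ν : Nat.Partition (k - j), F (j ::ₘ ν.parts)
      = ∑ ρ : Nat.Partition k, if j ∈ ρ.parts then F ρ.parts else 0 := by
  classical
  rw [← Finset.sum_filter]
  apply Finset.sum_bij'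
    (i := fun (ν : Nat.Partition (k-j)) _ => (⟨j ::ₘ ν.parts, by
        intro i hi
        rcases Multiset.mem_cons.1 hi with h | h
        · exact h ▸ hj0
        · exact ν.parts_pos h, by
        simp [ν.parts_sum, Nat.add_sub_cancel' hjk]⟩ : Nat.Partition k))
    (j := fun (ρ : Nat.Partition k) (hρ : ρ ∈ Finset.filter (fun a => j ∈ a.parts) Finset.univ) => (⟨ρ.parts.erase j, by
        intro i hi
        exact ρ.parts_pos (Multiset.mem_of_mem_erase hi), by
        have hmem : j ∈ ρ.parts := by simpa using (Finset.mem_filter.1 hρ).2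
        have := ρ.parts_sum
        have h2 : j + (ρ.parts.erase j).sum = ρ.parts.sum := by
          conv_rhs => rw [← Multiset.cons_erase hmem]
          simp
        omega⟩ : Nat.Partition (k - j)))
  · intro ν _
    apply Nat.Partition.ext
    simp [Multiset.erase_cons_head]
  · intro ρ hρ
    apply Nat.Partition.ext
    have hmem : j ∈ ρ.parts := by simpa using (Finset.mem_filter.1 hρ).2
    simpa using Multiset.cons_erase hmem
  · intro ν _
    rfl
  · intro ν _
    simp only [Finset.mem_filter, Finset.mem_univ, true_and]
    exact Multiset.mem_cons_self _ _
  · intro ρ _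
    exact Finset.mem_univ _

def rbu (j : ℕ) : RBR := ((j.factorial : ℚ))⁻¹ • RBX j
def rbv (n k : ℕ) : RBR := ∑ nu : Nat.Partition k, rbc n nu.parts • rbxm nu.parts

lemma rbxm_cons (a : ℕ) (m : Multiset ℕ) : rbxm (a ::ₘ m) = MvPolynomial.X a * rbxm m := by
  simp [rbxm]

lemma rbu_zero : rbu 0 = 1 := by simp [rbu, RBX]

/-- the singleton partition -/
def rbsing (k : ℕ) (hk : 1 ≤ k) : Nat.Partition k :=
  ⟨{k}, by intro i hi; rw [Multiset.mem_singleton.1 hi]; omega, by simp⟩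

lemma rb_R1 (n k : ℕ) (hk : 1 ≤ k) (hkn : k ≤ n) :
    ∑ j ∈ Finset.range k, ((k : ℚ) - j) • (rbu j * rbv n (k - j)) = (k : ℚ) • rbu k := by
  have hr : Finset.range k = insert 0 (Finset.Ioo 0 k) := by
    ext j; simp only [Finset.mem_range, Finset.mem_insert, Finset.mem_Ioo]; omega
  rw [hr, Finset.sum_insert (by simp)]
  -- j = 0 term
  have h0 : ((k : ℚ) - (0 : ℕ)) • (rbu 0 * rbv n (k - 0)) = ∑ ρ : Nat.Partition k,
      ((k : ℚ) * rbc n ρ.parts) • rbxm ρ.parts := by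
    rw [rbu_zero, one_mul]
    simp only [Nat.cast_zero, sub_zero, Nat.sub_zero, rbv, Finset.smul_sum, smul_smul]
  -- j ≥ 1 terms
  have h1 : ∀ j ∈ Finset.Ioo 0 k, ((k : ℚ) - j) • (rbu j * rbv n (k - j))
      = ∑ ρ : Nat.Partition k, (if j ∈ ρ.parts
          then ((k : ℚ) - j) / (j.factorial : ℚ) * rbc n (ρ.parts.erase j) else 0) • rbxm ρ.parts := by
    intro j hj
    obtain ⟨hj0, hjk⟩ := Finset.mem_Ioo.1 hj
    have hX : RBX j = MvPolynomial.X j := by simp [RBX, Nat.pos_iff_ne_zero.1 hj0]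
    have lhs_eq : ((k : ℚ) - j) • (rbu j * rbv n (k - j))
        = ∑ ν : Nat.Partition (k - j),
            (((k : ℚ) - j) / (j.factorial : ℚ) * rbc n (((j ::ₘ ν.parts)).erase j))
              • rbxm (j ::ₘ ν.parts) := by
      rw [rbu, hX, rbv, Finset.mul_sum, Finset.smul_sum]
      apply Finset.sum_congr rfl
      intro ν _
      rw [Multiset.erase_cons_head, rbxm_cons, smul_mul_smul_comm, smul_smul]
      congr 1
      ring
    rw [lhs_eq]
    rw [partition_insert_bij k j hj0 (le_of_lt hjk)
      (fun m => (((k : ℚ) - j) / (j.factorial : ℚ) * rbc n (m.erase j)) • rbxm m)]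
    apply Finset.sum_congr rfl
    intro ρ _
    split <;> simp
  rw [h0, Finset.sum_congr rfl h1, ← Finset.sum_comm, ← Finset.sum_add_distrib]
  have hRHS : (k : ℚ) • rbu k = ∑ ρ : Nat.Partition k,
      (if ρ = rbsing k hk then (k : ℚ) / (k.factorial : ℚ) else 0) • rbxm ρ.parts := by
    have hsplit : ∀ ρ : Nat.Partition k,
        (if ρ = rbsing k hk then (k : ℚ) / (k.factorial : ℚ) else 0) • rbxm ρ.parts
          = if ρ = rbsing k hk
            then ((k : ℚ) / (k.factorial : ℚ)) • rbxm (rbsing k hk).parts else 0 := by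
      intro ρ
      by_cases h : ρ = rbsing k hk
      · subst h; rw [if_pos rfl, if_pos rfl]
      · rw [if_neg h, if_neg h, zero_smul]
    rw [Finset.sum_congr rfl (fun ρ _ => hsplit ρ), Finset.sum_ite_eq' Finset.univ]
    rw [if_pos (Finset.mem_univ _)]
    have hxk : rbxm (rbsing k hk).parts = MvPolynomial.X k := by
      show rbxm {k} = _
      simp [rbxm]
    rw [hxk, rbu]
    have hXk : RBX k = MvPolynomial.X k := by
      simp [RBX, Nat.pos_iff_ne_zero.1 hk]
    rw [hXk, smul_smul, div_eq_mul_inv]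
  rw [hRHS]
  apply Finset.sum_congr rfl
  intro ρ _
  rw [← Finset.sum_smul, ← add_smul]
  congr 1
  have hrec := rbc_rec n k hk hkn ρ.parts (fun i hi => ρ.parts_pos hi) ρ.parts_sum
  rw [hrec]
  by_cases h : ρ.parts = {k}
  · rw [if_pos h, if_pos (Nat.Partition.ext h)]
  · rw [if_neg h, if_neg (fun hc => h (by rw [hc]; rfl))]

def rbw (j : ℕ) : RBR := ∑ a ∈ Finset.range (j + 1), rbu a * rbu (j - a)

lemma rbpsi_u (j : ℕ) : rbpsi (rbu j) = rbw j := by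
  rcases Nat.eq_zero_or_pos j with h | h
  · subst h
    rw [rbu_zero, map_one, rbw]
    simp [rbu_zero]
  · have hX : RBX j = MvPolynomial.X j := by simp [RBX, Nat.pos_iff_ne_zero.1 h]
    rw [rbu, hX, map_smul, rbpsi_X, rbw, Finset.smul_sum]
    apply Finset.sum_congr rfl
    intro a ha'
    have ha : (a : ℕ) ≤ j := by
      have := Finset.mem_range.1 ha'
      omega
    rw [rbu, rbu, smul_mul_smul_comm, smul_smul]
    congr 1
    rw [Nat.cast_choose ℚ ha]
    have h1 : ((a : ℕ).factorial : ℚ) ≠ 0 := by positivity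
    have h2 : ((j - (a : ℕ)).factorial : ℚ) ≠ 0 := by positivity
    have h3 : ((j).factorial : ℚ) ≠ 0 := by positivity
    field_simp

lemma rb_R2 (n k : ℕ) (hk : 1 ≤ k) (hkn : k ≤ n) :
    ∑ j ∈ Finset.range k, ((k : ℚ) - j) • (rbw j * ((2 : ℚ) • rbv n (k - j)))
      = (k : ℚ) • rbw k := by
  have step1 : ∑ j ∈ Finset.range k, ((k : ℚ) - j) • (rbw j * ((2 : ℚ) • rbv n (k - j)))
      = (2 : ℚ) • ∑ j ∈ Finset.range k, ((k : ℚ) - j) • (rbw j * rbv n (k - j)) := by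
    rw [Finset.smul_sum]
    apply Finset.sum_congr rfl
    intro j _
    rw [mul_smul_comm, smul_comm]
  rw [step1]
  -- expand rbw and swap sums
  have step2 : ∑ j ∈ Finset.range k, ((k : ℚ) - j) • (rbw j * rbv n (k - j))
      = ∑ j ∈ Finset.range k, ∑ a ∈ Finset.range (j + 1),
          ((k : ℚ) - j) • ((rbu a * rbu (j - a)) * rbv n (k - j)) := by
    apply Finset.sum_congr rfl
    intro j _
    rw [rbw, Finset.sum_mul, Finset.smul_sum]
  have step3 : ∑ j ∈ Finset.range k, ∑ a ∈ Finset.range (j + 1),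
        ((k : ℚ) - j) • ((rbu a * rbu (j - a)) * rbv n (k - j))
      = ∑ a ∈ Finset.range k, ∑ j ∈ Finset.Ico a k,
          ((k : ℚ) - j) • ((rbu a * rbu (j - a)) * rbv n (k - j)) := by
    apply Finset.sum_comm'
    intro j a
    simp only [Finset.mem_range, Finset.mem_Ico]
    omega
  have step5 : ∀ a ∈ Finset.range k, ∑ j ∈ Finset.Ico a k,
        ((k : ℚ) - j) • ((rbu a * rbu (j - a)) * rbv n (k - j))
      = ((k - a : ℕ) : ℚ) • (rbu a * rbu (k - a)) := by
    intro a ha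
    have hak : a < k := Finset.mem_range.1 ha
    rw [Finset.sum_Ico_eq_sum_range]
    have hterm : ∀ i ∈ Finset.range (k - a),
        ((k : ℚ) - (a + i : ℕ)) • ((rbu a * rbu ((a + i) - a)) * rbv n (k - (a + i)))
          = rbu a * ((((k - a : ℕ) : ℚ) - i) • (rbu i * rbv n ((k - a) - i))) := by
      intro i hi
      have hik : i < k - a := Finset.mem_range.1 hi
      rw [show (a + i) - a = i from by omega, show k - (a + i) = (k - a) - i from by omega,
        mul_assoc, mul_smul_comm]
      congr 1
      push_cast [Nat.cast_sub (le_of_lt hak)]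
      ring
    rw [Finset.sum_congr rfl hterm, ← Finset.mul_sum,
      rb_R1 n (k - a) (by omega) (by omega), mul_smul_comm]
  rw [step2, step3, Finset.sum_congr rfl step5]
  -- symmetrization
  have hf0 : ((k - k : ℕ) : ℚ) • (rbu k * rbu (k - k)) = 0 := by
    rw [Nat.sub_self]
    simp
  have hext : ∑ a ∈ Finset.range k, ((k - a : ℕ) : ℚ) • (rbu a * rbu (k - a))
      = ∑ a ∈ Finset.range (k + 1), ((k - a : ℕ) : ℚ) • (rbu a * rbu (k - a)) := by
    rw [Finset.sum_range_succ, hf0, add_zero]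
  have hrefl : ∑ a ∈ Finset.range (k + 1), ((k - a : ℕ) : ℚ) • (rbu a * rbu (k - a))
      = ∑ a ∈ Finset.range (k + 1), ((a : ℕ) : ℚ) • (rbu a * rbu (k - a)) := by
    rw [← Finset.sum_range_reflect (fun a => ((a : ℕ) : ℚ) • (rbu a * rbu (k - a))) (k + 1)]
    apply Finset.sum_congr rfl
    intro a ha
    have hak : a ≤ k := by
      have := Finset.mem_range.1 ha
      omega
    rw [show k + 1 - 1 - a = k - a from by omega, show k - (k - a) = a from by omega, mul_comm]
  have hsum : (2 : ℚ) • ∑ a ∈ Finset.range (k + 1), ((k - a : ℕ) : ℚ) • (rbu a * rbu (k - a))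
      = (k : ℚ) • rbw k := by
    rw [two_smul]
    nth_rewrite 2 [hrefl]
    rw [← Finset.sum_add_distrib, rbw, Finset.smul_sum]
    apply Finset.sum_congr rfl
    intro a ha
    have hak : a ≤ k := by
      have := Finset.mem_range.1 ha
      omega
    rw [← add_smul]
    congr 1
    push_cast [Nat.cast_sub hak]
    ring
  rw [hext, hsum]

lemma rbpsi_v (n : ℕ) : ∀ k, 1 ≤ k → k ≤ n → rbpsi (rbv n k) = (2 : ℚ) • rbv n k := by
  intro k
  induction k using Nat.strong_induction_on with
  | _ k IH =>
    intro hk hkn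
    have hpsiR1 := congrArg rbpsi (rb_R1 n k hk hkn)
    rw [map_sum, map_smul, rbpsi_u] at hpsiR1
    have hterm : ∀ j ∈ Finset.range k, rbpsi (((k : ℚ) - j) • (rbu j * rbv n (k - j)))
        = ((k : ℚ) - j) • (rbw j * rbpsi (rbv n (k - j))) := by
      intro j _
      rw [map_smul, map_mul, rbpsi_u]
    rw [Finset.sum_congr rfl hterm] at hpsiR1
    have hr : Finset.range k = insert 0 (Finset.Ioo 0 k) := by
      ext j; simp only [Finset.mem_range, Finset.mem_insert, Finset.mem_Ioo]; omega
    have hmem0 : (0 : ℕ) ∉ Finset.Ioo 0 k := by simp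
    rw [hr, Finset.sum_insert hmem0] at hpsiR1
    have hR2 := rb_R2 n k hk hkn
    rw [hr, Finset.sum_insert hmem0] at hR2
    have hIoo : ∀ j ∈ Finset.Ioo 0 k, ((k : ℚ) - j) • (rbw j * rbpsi (rbv n (k - j)))
        = ((k : ℚ) - j) • (rbw j * ((2 : ℚ) • rbv n (k - j))) := by
      intro j hj
      obtain ⟨h1, h2⟩ := Finset.mem_Ioo.1 hj
      rw [IH (k - j) (by omega) (by omega) (by omega)]
    rw [Finset.sum_congr rfl hIoo] at hpsiR1
    have hw0 : rbw 0 = 1 := by simp [rbw, rbu_zero]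
    simp only [Nat.cast_zero, sub_zero, Nat.sub_zero, hw0, one_mul] at hpsiR1 hR2
    have hEq : (k : ℚ) • rbpsi (rbv n k) = (k : ℚ) • ((2 : ℚ) • rbv n k) :=
      add_right_cancel (hpsiR1.trans hR2.symm)
    have hk0 : (k : ℚ) ≠ 0 := Nat.cast_ne_zero.2 (by omega)
    calc rbpsi (rbv n k) = (k : ℚ)⁻¹ • ((k : ℚ) • rbpsi (rbv n k)) := by
            rw [smul_smul, inv_mul_cancel₀ hk0, one_smul]
      _ = (k : ℚ)⁻¹ • ((k : ℚ) • ((2 : ℚ) • rbv n k)) := by rw [hEq]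
      _ = (2 : ℚ) • rbv n k := by rw [smul_smul, inv_mul_cancel₀ hk0, one_smul]

-- multiset/list utilities
lemma multiset_prod_toList {M : Type*} [CommMonoid M] (m : Multiset ℕ) (g : ℕ → M) :
    (m.map g).prod = ∏ j : Fin m.toList.length, g (m.toList.get j) := by
  conv_lhs => rw [← Multiset.coe_toList m]
  rw [Multiset.map_coe, Multiset.prod_coe]
  conv_lhs => rw [← List.ofFn_get m.toList]
  rw [List.map_ofFn, List.prod_ofFn]
  rfl

lemma multiset_sum_toList (m : Multiset ℕ) :
    m.sum = ∑ j : Fin m.toList.length, m.toList.get j := by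
  conv_lhs => rw [← Multiset.coe_toList m]
  rw [Multiset.sum_coe]
  conv_lhs => rw [← List.ofFn_get m.toList]
  rw [List.sum_ofFn]

lemma card_finsetSum {ι : Type*} (s : Finset ι) (f : ι → Multiset ℕ) :
    Multiset.card (∑ i ∈ s, f i) = ∑ i ∈ s, Multiset.card (f i) := by
  induction s using Finset.cons_induction with
  | empty => simp
  | cons a s ha ih => simp [Finset.sum_cons, ih]

lemma rb_map_finsetSum {ι M : Type*} (s : Finset ι) (f : ι → Multiset ℕ) (g : ℕ → M) :
    (∑ i ∈ s, f i).map g = ∑ i ∈ s, (f i).map g := by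
  induction s using Finset.cons_induction with
  | empty => simp
  | cons a s ha ih => rw [Finset.sum_cons, Finset.sum_cons, Multiset.map_add, ih]

lemma prod_map_finsetSum {ι : Type*} (s : Finset ι) (f : ι → Multiset ℕ) (g : ℕ → ℚ) :
    ((∑ i ∈ s, f i).map g).prod = ∏ i ∈ s, ((f i).map g).prod := by
  induction s using Finset.cons_induction with
  | empty => simp
  | cons a s ha ih =>
      rw [Finset.sum_cons, Finset.prod_cons, Multiset.map_add, Multiset.prod_add, ih]

lemma rbxm_zero : rbxm 0 = 1 := by simp [rbxm]

lemma rbxm_finsetSum {ι : Type*} (s : Finset ι) (f : ι → Multiset ℕ) :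
    rbxm (∑ i ∈ s, f i) = ∏ i ∈ s, rbxm (f i) := by
  induction s using Finset.cons_induction with
  | empty => simp [rbxm_zero]
  | cons a s ha ih => rw [Finset.sum_cons, Finset.prod_cons, rbxm_add, ih]

lemma prod_smul_rbr {ι : Type*} (s : Finset ι) (a : ι → ℚ) (x : ι → RBR) :
    ∏ i ∈ s, a i • x i = (∏ i ∈ s, a i) • ∏ i ∈ s, x i := by
  induction s using Finset.cons_induction with
  | empty => simp
  | cons b s hb ih =>
      rw [Finset.prod_cons, Finset.prod_cons, Finset.prod_cons, ih, smul_mul_smul_comm]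

lemma partition_parts_card_pos {k : ℕ} (hk : 1 ≤ k) (nu : Nat.Partition k) :
    1 ≤ Multiset.card nu.parts := by
  rcases Nat.eq_zero_or_pos (Multiset.card nu.parts) with h | h
  · rw [Multiset.card_eq_zero] at h
    have := nu.parts_sum
    rw [h] at this
    simp at this
    omega
  · omega

lemma sum_finsetSum {ι : Type*} (s : Finset ι) (f : ι → Multiset ℕ) :
    (∑ i ∈ s, f i).sum = ∑ i ∈ s, (f i).sum := by
  induction s using Finset.cons_induction with
  | empty => simp
  | cons a s ha ih => rw [Finset.sum_cons, Finset.sum_cons, Multiset.sum_add, ih]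

def rbPhi {n : ℕ} (lam : Nat.Partition n)
    (t : (j : Fin lam.parts.toList.length) → Nat.Partition (lam.parts.toList.get j)) :
    Nat.Partition n where
  parts := ∑ j, (t j).parts
  parts_pos := by
    intro i hi
    obtain ⟨j, _, hj⟩ := Multiset.mem_sum.1 hi
    exact (t j).parts_pos hj
  parts_sum := by
    rw [sum_finsetSum]
    rw [Finset.sum_congr rfl (fun j _ => (t j).parts_sum), ← multiset_sum_toList,
      lam.parts_sum]

lemma rb_expandG (n : ℕ) (hn : 1 ≤ n) (lam : Nat.Partition n) :
    ∏ j : Fin lam.parts.toList.length,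
        (((lam.parts.toList.get j).factorial : ℚ) • rbv n (lam.parts.toList.get j))
      = ∑ mu : Nat.Partition n, rockG n lam mu • rbxm mu.parts := by
  have hpart : ∀ j : Fin lam.parts.toList.length, 1 ≤ lam.parts.toList.get j := by
    intro j
    have hmem : lam.parts.toList.get j ∈ lam.parts := by
      rw [← Multiset.mem_toList]
      exact List.get_mem _ j
    exact lam.parts_pos hmem
  have h1 : ∀ j : Fin lam.parts.toList.length,
      ((lam.parts.toList.get j).factorial : ℚ) • rbv n (lam.parts.toList.get j)
        = ∑ nu : Nat.Partition (lam.parts.toList.get j),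
            (((lam.parts.toList.get j).factorial : ℚ) * rbc n nu.parts) • rbxm nu.parts := by
    intro j
    rw [rbv, Finset.smul_sum]
    exact Finset.sum_congr rfl (fun nu _ => smul_smul _ _ _)
  rw [Finset.prod_congr rfl (fun j _ => h1 j),
    Finset.prod_univ_sum (fun _ => Finset.univ), Fintype.piFinset_univ]
  have h2 : ∀ t : ((j : Fin lam.parts.toList.length) → Nat.Partition (lam.parts.toList.get j)),
      ∏ j, ((((lam.parts.toList.get j).factorial : ℚ) * rbc n (t j).parts) • rbxm (t j).parts)
        = (∏ j, (((lam.parts.toList.get j).factorial : ℚ) * rbc n (t j).parts))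
            • rbxm ((rbPhi lam t).parts) := by
    intro t
    rw [prod_smul_rbr, ← rbxm_finsetSum]
    rfl
  rw [Finset.sum_congr rfl (fun t _ => h2 t),
    ← Finset.sum_fiberwise Finset.univ (fun t => rbPhi lam t)]
  apply Finset.sum_congr rfl
  intro mu _
  have h3 : ∀ t ∈ Finset.filter (fun t => rbPhi lam t = mu) Finset.univ,
      (∏ j, (((lam.parts.toList.get j).factorial : ℚ) * rbc n (t j).parts))
          • rbxm ((rbPhi lam t).parts)
        = (∏ j, (((lam.parts.toList.get j).factorial : ℚ) * rbc n (t j).parts))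
            • rbxm mu.parts := by
    intro t ht
    rw [(Finset.mem_filter.1 ht).2]
  rw [Finset.sum_congr rfl h3, ← Finset.sum_smul]
  congr 1
  -- scalar identity
  rw [Finset.sum_filter, rockG, Finset.mul_sum]
  apply Finset.sum_congr rfl
  intro t _
  by_cases hc : (∑ j, (t j).parts) = mu.parts
  · rw [if_pos hc, if_pos (Nat.Partition.ext (by exact hc))]
    -- main computation
    have hLf : (lam.parts.map fun j => ((j.factorial : ℚ))).prod
        = ∏ j : Fin lam.parts.toList.length, ((lam.parts.toList.get j).factorial : ℚ) :=
      multiset_prod_toList _ _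
    have hrbc : ∀ j : Fin lam.parts.toList.length, rbc n (t j).parts
        = ((-1 : ℚ)) ^ (Multiset.card (t j).parts - 1)
            * ((((t j).parts.map fun s => ((s.factorial : ℚ))).prod)⁻¹
            * (((Multiset.card (t j).parts - 1).factorial : ℚ)
                / ∏ i ∈ Finset.range (n + 1), (((t j).parts.count i).factorial : ℚ))) := by
      intro j
      rw [rbc]
      ring
    have hcard : ∑ j, Multiset.card (t j).parts = Multiset.card mu.parts := by
      rw [← hc, card_finsetSum]
    have hlj : ∀ j : Fin lam.parts.toList.length, 1 ≤ Multiset.card (t j).parts :=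
      fun j => partition_parts_card_pos (hpart j) (t j)
    have hexp : ∑ j, (Multiset.card (t j).parts - 1)
        = Multiset.card mu.parts - Multiset.card lam.parts := by
      have h5 : ∑ j, (Multiset.card (t j).parts - 1) + ∑ (j : Fin lam.parts.toList.length), 1
          = ∑ j, Multiset.card (t j).parts := by
        rw [← Finset.sum_add_distrib]
        exact Finset.sum_congr rfl (fun j _ => by have := hlj j; omega)
      have h6 : ∑ (j : Fin lam.parts.toList.length), 1 = lam.parts.toList.length := by simp
      have h7 : Multiset.card lam.parts = lam.parts.toList.length :=
        (Multiset.length_toList _).symm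
      omega
    have hF : ∏ j, (((t j).parts.map fun s => ((s.factorial : ℚ))).prod)⁻¹
        = ((mu.parts.map fun s => ((s.factorial : ℚ))).prod)⁻¹ := by
      rw [Finset.prod_inv_distrib, ← prod_map_finsetSum, hc]
    rw [Finset.prod_mul_distrib, hLf, Finset.prod_congr rfl (fun j _ => hrbc j),
      Finset.prod_mul_distrib, Finset.prod_mul_distrib,
      Finset.prod_pow_eq_pow_sum, hexp, hF]
    ring
  · rw [if_neg hc, if_neg (fun h : rbPhi lam t = mu => hc (by
      have := congrArg Nat.Partition.parts h
      exact this)), mul_zero]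

lemma multiset_filter_ne_sum (m : Multiset ℕ) :
    (m.filter (fun x => x ≠ 0)).sum = m.sum := by
  induction m using Multiset.induction_on with
  | empty => simp
  | cons a s ih =>
      rw [Multiset.filter_cons, Multiset.sum_cons, Multiset.sum_add, ih]
      by_cases ha : a = 0
      · subst ha; simp
      · rw [if_pos ha]
        simp

lemma rbxm_filter (m : Multiset ℕ) :
    rbxm (m.filter (fun x => x ≠ 0)) = (m.map RBX).prod := by
  induction m using Multiset.induction_on with
  | empty => simp [rbxm]
  | cons a s ih =>
      rw [Multiset.filter_cons, Multiset.map_cons, Multiset.prod_cons, rbxm_add, ih]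
      by_cases ha : a = 0
      · subst ha
        rw [if_neg (by simp), rbxm_zero, one_mul]
        simp [RBX]
      · rw [if_pos ha]
        have : rbxm {a} = MvPolynomial.X a := by simp [rbxm]
        rw [this]
        simp [RBX, ha]

lemma prod_RBX_ofFn {L : ℕ} (f : Fin L → ℕ) :
    ((↑(List.ofFn f) : Multiset ℕ).map RBX).prod = ∏ j, RBX (f j) := by
  rw [Multiset.map_coe, Multiset.prod_coe, List.map_ofFn, List.prod_ofFn]
  rfl

/-- the result of a break -/
def rbBreak {n : ℕ} (mu : Nat.Partition n)
    (s : (j : Fin mu.parts.toList.length) → Fin (mu.parts.toList.get j + 1)) :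
    Nat.Partition n where
  parts := ((↑(List.ofFn fun j => (s j : ℕ)) +
      ↑(List.ofFn fun j => mu.parts.toList.get j - (s j : ℕ)) : Multiset ℕ).filter
      (fun x => x ≠ 0))
  parts_pos := by
    intro i hi
    have := Multiset.of_mem_filter hi
    omega
  parts_sum := by
    rw [multiset_filter_ne_sum, Multiset.sum_add, Multiset.sum_coe, Multiset.sum_coe,
      List.sum_ofFn, List.sum_ofFn, ← Finset.sum_add_distrib]
    have : ∀ j : Fin mu.parts.toList.length,
        (s j : ℕ) + (mu.parts.toList.get j - (s j : ℕ)) = mu.parts.toList.get j := by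
      intro j
      have := (s j).is_le
      omega
    rw [Finset.sum_congr rfl (fun j _ => this j), ← multiset_sum_toList, mu.parts_sum]

lemma rb_expandP (n : ℕ) (mu : Nat.Partition n) :
    rbpsi (rbxm mu.parts)
      = ∑ rho : Nat.Partition n, ((2 : ℚ) ^ n * rockP n mu rho) • rbxm rho.parts := by
  have h0 : rbxm mu.parts = ∏ j : Fin mu.parts.toList.length,
      MvPolynomial.X (mu.parts.toList.get j) := multiset_prod_toList _ _
  rw [h0, map_prod]
  have h1 : ∀ j : Fin mu.parts.toList.length,
      rbpsi (MvPolynomial.X (mu.parts.toList.get j))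
        = ∑ i : Fin (mu.parts.toList.get j + 1),
            (((mu.parts.toList.get j).choose i : ℚ))
              • (RBX i * RBX (mu.parts.toList.get j - i)) := by
    intro j
    rw [rbpsi_X, ← Fin.sum_univ_eq_sum_range
      (fun i => (((mu.parts.toList.get j).choose i : ℚ))
        • (RBX i * RBX (mu.parts.toList.get j - i))) (mu.parts.toList.get j + 1)]
  rw [Finset.prod_congr rfl (fun j _ => h1 j),
    Finset.prod_univ_sum (fun _ => Finset.univ), Fintype.piFinset_univ]
  have h2 : ∀ s : ((j : Fin mu.parts.toList.length) → Fin (mu.parts.toList.get j + 1)),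
      ∏ j, ((((mu.parts.toList.get j).choose (s j) : ℚ))
          • (RBX (s j) * RBX (mu.parts.toList.get j - (s j))))
        = (∏ j, (((mu.parts.toList.get j).choose (s j) : ℚ))) • rbxm ((rbBreak mu s).parts) := by
    intro s
    rw [prod_smul_rbr]
    congr 1
    have hb : (rbBreak mu s).parts = ((↑(List.ofFn fun j => ((s j : ℕ))) +
        ↑(List.ofFn fun j => mu.parts.toList.get j - (s j : ℕ)) : Multiset ℕ).filter
        (fun x => x ≠ 0)) := rfl
    rw [hb, rbxm_filter, Multiset.map_add, Multiset.prod_add, prod_RBX_ofFn, prod_RBX_ofFn,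
      ← Finset.prod_mul_distrib]
  rw [Finset.sum_congr rfl (fun s _ => h2 s),
    ← Finset.sum_fiberwise Finset.univ (fun s => rbBreak mu s)]
  apply Finset.sum_congr rfl
  intro rho _
  have h3 : ∀ s ∈ Finset.filter (fun s => rbBreak mu s = rho) Finset.univ,
      (∏ j, (((mu.parts.toList.get j).choose (s j) : ℚ))) • rbxm ((rbBreak mu s).parts)
        = (∏ j, (((mu.parts.toList.get j).choose (s j) : ℚ))) • rbxm rho.parts := by
    intro s hs
    rw [(Finset.mem_filter.1 hs).2]
  rw [Finset.sum_congr rfl h3, ← Finset.sum_smul]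
  congr 1
  rw [Finset.sum_filter, rockP, ← mul_assoc, mul_inv_cancel₀ (by positivity), one_mul]
  apply Finset.sum_congr rfl
  intro s _
  by_cases hc : ((↑(List.ofFn fun j => ((s j : ℕ))) +
      ↑(List.ofFn fun j => mu.parts.toList.get j - (s j : ℕ)) : Multiset ℕ).filter
      (fun x => x ≠ 0)) = rho.parts
  · rw [if_pos (Nat.Partition.ext (by exact hc)), if_pos hc]
  · rw [if_neg (fun h : rbBreak mu s = rho => hc (congrArg Nat.Partition.parts h)), if_neg hc]

lemma mem_le_sum {a : ℕ} {m : Multiset ℕ} (h : a ∈ m) : a ≤ m.sum := by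
  have h2 : a + (m.erase a).sum = m.sum := by
    conv_rhs => rw [← Multiset.cons_erase h]
    simp
  omega

theorem rockBreaking_left_eigenfunction' (n : ℕ) (hn : 1 ≤ n) (lam : Nat.Partition n) :
    (∀ rho : Nat.Partition n,
      ∑ mu : Nat.Partition n, rockG n lam mu * rockP n mu rho =
        (2 : ℚ) ^ ((Multiset.card lam.parts : ℤ) - (n : ℤ)) * rockG n lam rho) ∧
    (∀ mu : Nat.Partition n, ¬ PartitionRefines n mu lam → rockG n lam mu = 0) := by
  constructor
  · intro rho
    set L := lam.parts.toList.length with hL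
    have hpart : ∀ j : Fin L, 1 ≤ lam.parts.toList.get j := by
      intro j
      refine lam.parts_pos ?_
      rw [← Multiset.mem_toList]
      exact List.get_mem _ j
    have hpartle : ∀ j : Fin L, lam.parts.toList.get j ≤ n := by
      intro j
      have hmem : lam.parts.toList.get j ∈ lam.parts := by
        rw [← Multiset.mem_toList]
        exact List.get_mem _ j
      have := mem_le_sum hmem
      rw [lam.parts_sum] at this
      exact this
    set f := ∏ j : Fin L,
      (((lam.parts.toList.get j).factorial : ℚ) • rbv n (lam.parts.toList.get j)) with hf
    have hG : f = ∑ mu : Nat.Partition n, rockG n lam mu • rbxm mu.parts :=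
      rb_expandG n hn lam
    have hpsif : rbpsi f = ((2 : ℚ) ^ L) • f := by
      rw [hf, map_prod]
      have h1 : ∀ j : Fin L, rbpsi (((lam.parts.toList.get j).factorial : ℚ)
            • rbv n (lam.parts.toList.get j))
          = (2 : ℚ) • (((lam.parts.toList.get j).factorial : ℚ)
            • rbv n (lam.parts.toList.get j)) := by
        intro j
        rw [map_smul, rbpsi_v n _ (hpart j) (hpartle j), smul_comm]
      rw [Finset.prod_congr rfl (fun j _ => h1 j), prod_smul_rbr, Finset.prod_const,
        Finset.card_univ, Fintype.card_fin]
    -- coefficient extraction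
    have hcoeff1 : MvPolynomial.coeff (Multiset.toFinsupp rho.parts) (rbpsi f)
        = ∑ mu : Nat.Partition n, rockG n lam mu * ((2 : ℚ) ^ n * rockP n mu rho) := by
      rw [hG, map_sum, MvPolynomial.coeff_sum]
      apply Finset.sum_congr rfl
      intro mu _
      rw [map_smul, rb_expandP n mu, MvPolynomial.coeff_smul, smul_eq_mul]
      rw [coeff_partition_sum n (fun rho' => (2 : ℚ) ^ n * rockP n mu rho') rho]
    have hcoeff2 : MvPolynomial.coeff (Multiset.toFinsupp rho.parts) (rbpsi f)
        = (2 : ℚ) ^ L * rockG n lam rho := by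
      rw [hpsif, MvPolynomial.coeff_smul, smul_eq_mul, hG,
        coeff_partition_sum n (fun mu => rockG n lam mu) rho]
    have key : ∑ mu : Nat.Partition n, rockG n lam mu * ((2 : ℚ) ^ n * rockP n mu rho)
        = (2 : ℚ) ^ L * rockG n lam rho := by rw [← hcoeff1, hcoeff2]
    have key2 : (2 : ℚ) ^ n * ∑ mu : Nat.Partition n, rockG n lam mu * rockP n mu rho
        = (2 : ℚ) ^ L * rockG n lam rho := by
      rw [Finset.mul_sum]
      rw [Finset.sum_congr rfl (fun mu _ => by ring : ∀ mu ∈ Finset.univ,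
        (2 : ℚ) ^ n * (rockG n lam mu * rockP n mu rho)
          = rockG n lam mu * ((2 : ℚ) ^ n * rockP n mu rho))]
      exact key
    have hcL : Multiset.card lam.parts = L := (Multiset.length_toList _).symm
    rw [hcL]
    have h2n : ((2 : ℚ) ^ n) ≠ 0 := by positivity
    have hzpow : (2 : ℚ) ^ ((L : ℤ) - (n : ℤ)) = (2 : ℚ) ^ L / (2 : ℚ) ^ n := by
      rw [zpow_sub₀ (by norm_num : (2:ℚ) ≠ 0), zpow_natCast, zpow_natCast]
    rw [hzpow, div_mul_eq_mul_div, eq_div_iff h2n, mul_comm _ ((2:ℚ)^n), key2]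
  · intro mu hmu
    rw [rockG]
    have : (∑ t : ((j : Fin lam.parts.toList.length)
          → Nat.Partition (lam.parts.toList.get j)),
        if (∑ j, (t j).parts) = mu.parts then
          ∏ j, (((Multiset.card (t j).parts - 1).factorial : ℚ) /
            ∏ i ∈ Finset.range (n + 1), (((t j).parts.count i).factorial : ℚ))
        else 0) = 0 := by
      apply Finset.sum_eq_zero
      intro t _
      exact if_neg (fun hc => hmu ⟨t, hc⟩)
    rw [this, mul_zero]

end RBaux

/-- `g_λ` is a left eigenfunction of the rock-breaking chain with eigenvalue
`2^{l(λ)-n}`, and `g_λ(μ) = 0` unless `μ` refines `λ`. -/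
theorem rockBreaking_left_eigenfunction (n : ℕ) (hn : 1 ≤ n) (lam : Nat.Partition n) :
    (∀ rho : Nat.Partition n,
      ∑ mu : Nat.Partition n, rockG n lam mu * rockP n mu rho =
        (2 : ℚ) ^ ((Multiset.card lam.parts : ℤ) - (n : ℤ)) * rockG n lam rho) ∧
    (∀ mu : Nat.Partition n, ¬ PartitionRefines n mu lam → rockG n lam mu = 0) := by
  exact rockBreaking_left_eigenfunction' n hn lam
end

section
/- Fix n ≥ 1, an integer a ≥ 1, and a word w : {1,…,n} → ℕ (a deck of cards whose values may repeat). For a word u of length n, let asc(u) = #{1 ≤ i ≤ n−1 : u(i) < u(i+1)} and des(u) = #{1 ≤ i ≤ n−1 : u(i) > u(i+1)}. For each function f : {1,…,n} → {1,…,a}, let ρ_f ∈ S_n be the permutation such that ρ_f(1), ρ_f(2), …, ρ_f(n) lists the positions {1,…,n} in increasing lexicographic order of the pairs (f(i), i); the GSR a-shuffle applied to w with cut-labels f produces the word w ∘ ρ_f^{−1}. Then Σ_{f : {1,…,n} → {1,…,a}} [ asc(w ∘ ρ_f^{−1}) − des(w ∘ ρ_f^{−1}) ] = a^{n−1} ·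 [ asc(w) − des(w) ]; that is, asc − des is a right eigenfunction of the a-shuffle chain on decks of any composition, with eigenvalue 1/a. -/
open scoped Classical

/-- The number of strict ascents of a word `u` of length `n`:
positions `i` with `u(i) < u(i+1)`. -/
noncomputable def wordAscents {n : ℕ} (u : Fin n → ℕ) : ℕ :=
  ((Finset.range n).filter fun i =>
    ∃ h : i + 1 < n, u ⟨i, Nat.lt_of_succ_lt h⟩ < u ⟨i + 1, h⟩).card

/-- The number of strict descents of a word `u` of length `n`:
positions `i` with `u(i) > u(i+1)`. -/
noncomputable def wordDescents {n : ℕ} (u : Fin n → ℕ) : ℕ :=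
  ((Finset.range n).filter fun i =>
    ∃ h : i + 1 < n, u ⟨i + 1, h⟩ < u ⟨i, Nat.lt_of_succ_lt h⟩).card

namespace GSRAux

variable {α : Type*} [LinearOrder α]

/-- lex order on pairs (f p, p) -/
def mlt {n : ℕ} (f : Fin n → α) (p q : Fin n) : Prop :=
  f p < f q ∨ (f p = f q ∧ p < q)

lemma mlt_irrefl {n : ℕ} (f : Fin n → α) (p : Fin n) : ¬ mlt f p p := by
  simp [mlt]

lemma mlt_total {n : ℕ} (f : Fin n → α) {p q : Fin n} (h : p ≠ q) :
    mlt f p q ∨ mlt f q p := by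
  rcases lt_trichotomy (f p) (f q) with h1 | h1 | h1
  · exact Or.inl (Or.inl h1)
  · rcases lt_or_gt_of_ne h with h2 | h2
    · exact Or.inl (Or.inr ⟨h1, h2⟩)
    · exact Or.inr (Or.inr ⟨h1.symm, h2⟩)
  · exact Or.inr (Or.inl h1)

lemma mlt_asymm {n : ℕ} (f : Fin n → α) {p q : Fin n} (h : mlt f p q) : ¬ mlt f q p := by
  rcases h with h | ⟨h1, h2⟩
  · rintro (h' | ⟨h1', h2'⟩)
    · exact absurd (h.trans h') (lt_irrefl _)
    · exact absurd h (h1' ▸ lt_irrefl _)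
  · rintro (h' | ⟨h1', h2'⟩)
    · exact absurd h' (h1 ▸ lt_irrefl _)
    · exact absurd (h2.trans h2') (lt_irrefl _)

lemma sort_mlt {n : ℕ} (f : Fin n → α) {i j : Fin n} (h : i < j) :
    mlt f (Tuple.sort f i) (Tuple.sort f j) := by
  have hm := (Tuple.eq_sort_iff (f := f) (σ := Tuple.sort f)).mp rfl
  rcases lt_or_eq_of_le (hm.1 h.le) with h1 | h1
  · exact Or.inl h1
  · exact Or.inr ⟨h1, hm.2 i j h h1⟩

lemma mlt_sort_iff {n : ℕ} (f : Fin n → α) {i j : Fin n} :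
    mlt f (Tuple.sort f i) (Tuple.sort f j) ↔ i < j := by
  refine ⟨fun h => ?_, sort_mlt f⟩
  rcases lt_trichotomy i j with h1 | h1 | h1
  · exact h1
  · exact absurd h (h1 ▸ mlt_irrefl f _)
  · exact absurd h (mlt_asymm f (sort_mlt f h1))

/-- the (0-indexed) rank of position `i` in the stable sort of `f` -/
noncomputable def rk {n : ℕ} (f : Fin n → α) (i : Fin n) : ℕ :=
  (Finset.univ.filter fun r => mlt f r i).card

lemma sortinv_eq_rk {n : ℕ} (f : Fin n → α) (i : Fin n) :
    (((Tuple.sort f)⁻¹ i : Fin n) : ℕ) = rk f i := by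
  set σ := Tuple.sort f
  have key : (Finset.univ.filter fun r => mlt f r i) =
      (Finset.univ.filter fun k => k < σ⁻¹ i).image σ := by
    ext r
    simp only [Finset.mem_filter, Finset.mem_univ, true_and, Finset.mem_image]
    constructor
    · intro h
      refine ⟨σ⁻¹ r, ?_, by simp [σ]⟩
      rw [← mlt_sort_iff f (i := σ⁻¹ r) (j := σ⁻¹ i)]
      simpa [σ] using h
    · rintro ⟨k, hk, rfl⟩
      have := sort_mlt f hk
      simpa [σ] using this
  rw [rk, key, Finset.card_image_of_injective _ σ.injective]
  have : (Finset.univ.filter fun k => k < σ⁻¹ i) = Finset.Iio (σ⁻¹ i) := by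
    ext k; simp
  rw [this, Fin.card_Iio]

/-- P1: if adjacent labels are equal, ranks are consecutive. -/
lemma rk_succ_of_eq {m : ℕ} (f : Fin (m+1) → α) (i : Fin m)
    (hf : f i.castSucc = f i.succ) :
    rk f i.succ = rk f i.castSucc + 1 := by
  have hlt : i.castSucc < i.succ := Fin.castSucc_lt_succ
  have key : (Finset.univ.filter fun r => mlt f r i.succ) =
      insert i.castSucc (Finset.univ.filter fun r => mlt f r i.castSucc) := by
    ext r
    simp only [Finset.mem_filter, Finset.mem_univ, true_and, Finset.mem_insert]
    constructor
    · rintro (h | ⟨h1, h2⟩)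
      · exact Or.inr (Or.inl (hf ▸ h))
      · -- r < i.succ : either r = i.castSucc or r < i.castSucc
        have : (r : ℕ) < (i : ℕ) + 1 := h2
        rcases eq_or_lt_of_le (Nat.lt_succ_iff.mp this) with h3 | h3
        · exact Or.inl (Fin.ext h3)
        · exact Or.inr (Or.inr ⟨hf ▸ h1, h3⟩)
    · rintro (rfl | h | ⟨h1, h2⟩)
      · exact Or.inr ⟨hf, hlt⟩
      · exact Or.inl (hf ▸ h)
      · exact Or.inr ⟨hf ▸ h1, h2.trans hlt⟩
  rw [rk, key, Finset.card_insert_of_notMem (by simp [mlt_irrefl])]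
  rfl

/-- helper : cardinality of a filter over univ is invariant under composing with a permutation -/
lemma card_filter_perm {n : ℕ} (e : Equiv.Perm (Fin n)) (P : Fin n → Prop) :
    (Finset.univ.filter fun r => P (e r)).card = (Finset.univ.filter P).card := by
  apply Finset.card_bij (fun r _ => e r)
  · intro r hr
    simp only [Finset.mem_filter, Finset.mem_univ, true_and] at hr ⊢
    exact hr
  · intro r _ s _ h
    exact e.injective h
  · intro s hs
    refine ⟨e.symm s, ?_, by simp⟩
    simp only [Finset.mem_filter, Finset.mem_univ, true_and, Equiv.apply_symm_apply] at hs ⊢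
    exact hs

/-- P2a -/
lemma rk_swap₁ {m : ℕ} (f : Fin (m+1) → α) (i : Fin m)
    (hne : f i.castSucc ≠ f i.succ) :
    rk (f ∘ (Equiv.swap i.castSucc i.succ)) i.castSucc = rk f i.succ := by
  have hlt : i.castSucc < i.succ := Fin.castSucc_lt_succ
  set s := Equiv.swap i.castSucc i.succ with hs
  have h1 : (f ∘ s) i.castSucc = f i.succ := by simp [hs]
  have h2 : (f ∘ s) i.succ = f i.castSucc := by simp [hs]
  have key : ∀ r, mlt (f ∘ s) r i.castSucc ↔ mlt f (s r) i.succ := by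
    intro r
    rcases eq_or_ne r i.castSucc with rfl | hr1
    · rw [show s i.castSucc = i.succ from Equiv.swap_apply_left _ _]
      exact ⟨fun h => absurd h (mlt_irrefl _ _), fun h => absurd h (mlt_irrefl _ _)⟩
    rcases eq_or_ne r i.succ with rfl | hr2
    · rw [show s i.succ = i.castSucc from Equiv.swap_apply_right _ _]
      constructor
      · rintro (h | ⟨hh1, hh2⟩)
        · rw [h2, h1] at h; exact Or.inl h
        · rw [h2, h1] at hh1; exact absurd hh1 hne
      · rintro (h | ⟨hh1, hh2⟩)
        · exact Or.inl (by rw [h2, h1]; exact h)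
        · exact absurd hh1 hne
    · have hsr : s r = r := Equiv.swap_apply_of_ne_of_ne hr1 hr2
      have hfr : (f ∘ s) r = f r := by rw [Function.comp_apply, hsr]
      rw [hsr]
      constructor
      · rintro (h | ⟨hh1, hh2⟩)
        · rw [hfr, h1] at h; exact Or.inl h
        · rw [hfr, h1] at hh1; exact Or.inr ⟨hh1, hh2.trans hlt⟩
      · rintro (h | ⟨hh1, hh2⟩)
        · exact Or.inl (by rw [hfr, h1]; exact h)
        · refine Or.inr ⟨by rw [hfr, h1]; exact hh1, ?_⟩
          rw [Fin.lt_def] at hh2 ⊢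
          simp only [Fin.coe_castSucc, Fin.val_succ] at hh2 ⊢
          have hne3 : (r : ℕ) ≠ (i : ℕ) := fun h => hr1 (Fin.ext (by simpa using h))
          omega
  calc rk (f ∘ s) i.castSucc
      = (Finset.univ.filter fun r => mlt f (s r) i.succ).card := by
        unfold rk; congr 1; apply Finset.filter_congr; intro r _; simp [key r]
    _ = rk f i.succ := card_filter_perm s (fun r => mlt f r i.succ)

/-- P2b -/
lemma rk_swap₂ {m : ℕ} (f : Fin (m+1) → α) (i : Fin m)
    (hne : f i.castSucc ≠ f i.succ) :
    rk (f ∘ (Equiv.swap i.castSucc i.succ)) i.succ = rk f i.castSucc := by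
  have hlt : i.castSucc < i.succ := Fin.castSucc_lt_succ
  set s := Equiv.swap i.castSucc i.succ with hs
  have h1 : (f ∘ s) i.castSucc = f i.succ := by simp [hs]
  have h2 : (f ∘ s) i.succ = f i.castSucc := by simp [hs]
  have key : ∀ r, mlt (f ∘ s) r i.succ ↔ mlt f (s r) i.castSucc := by
    intro r
    rcases eq_or_ne r i.castSucc with rfl | hr1
    · rw [show s i.castSucc = i.succ from Equiv.swap_apply_left _ _]
      constructor
      · rintro (h | ⟨hh1, hh2⟩)
        · rw [h1, h2] at h; exact Or.inl h
        · rw [h1, h2] at hh1; exact absurd hh1 (Ne.symm hne)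
      · rintro (h | ⟨hh1, hh2⟩)
        · exact Or.inl (by rw [h1, h2]; exact h)
        · exact absurd hh1 (Ne.symm hne)
    rcases eq_or_ne r i.succ with rfl | hr2
    · rw [show s i.succ = i.castSucc from Equiv.swap_apply_right _ _]
      exact ⟨fun h => absurd h (mlt_irrefl _ _), fun h => absurd h (mlt_irrefl _ _)⟩
    · have hsr : s r = r := Equiv.swap_apply_of_ne_of_ne hr1 hr2
      have hfr : (f ∘ s) r = f r := by rw [Function.comp_apply, hsr]
      rw [hsr]
      constructor
      · rintro (h | ⟨hh1, hh2⟩)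
        · rw [hfr, h2] at h; exact Or.inl h
        · rw [hfr, h2] at hh1
          refine Or.inr ⟨hh1, ?_⟩
          rw [Fin.lt_def] at hh2 ⊢
          simp only [Fin.coe_castSucc, Fin.val_succ] at hh2 ⊢
          have hne3 : (r : ℕ) ≠ (i : ℕ) := fun h => hr1 (Fin.ext (by simpa using h))
          omega
      · rintro (h | ⟨hh1, hh2⟩)
        · exact Or.inl (by rw [hfr, h2]; exact h)
        · exact Or.inr ⟨by rw [hfr, h2]; exact hh1, hh2.trans hlt⟩
  calc rk (f ∘ s) i.succ
      = (Finset.univ.filter fun r => mlt f (s r) i.castSucc).card := by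
        unfold rk; congr 1; apply Finset.filter_congr; intro r _; simp [key r]
    _ = rk f i.castSucc := card_filter_perm s (fun r => mlt f r i.castSucc)

/-- duplicate the `i`-th entry of `g` -/
def dup {m : ℕ} (g : Fin m → α) (i : Fin m) : Fin (m+1) → α :=
  fun r => if h : (r : ℕ) ≤ (i : ℕ) then g ⟨r, lt_of_le_of_lt h i.isLt⟩
    else g ⟨(r : ℕ) - 1, by have := r.isLt; omega⟩

/-- collapse the two adjacent entries `i, i+1` of `f` -/
def clp {m : ℕ} (f : Fin (m+1) → α) (i : Fin m) : Fin m → α :=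
  fun j => if (j : ℕ) ≤ (i : ℕ) then f j.castSucc else f j.succ

lemma dup_castSucc {m : ℕ} (g : Fin m → α) (i : Fin m) : dup g i i.castSucc = g i := by
  have : ((i.castSucc : Fin (m+1)) : ℕ) ≤ (i : ℕ) := by simp
  rw [dup, dif_pos this]
  congr 1

lemma dup_succ {m : ℕ} (g : Fin m → α) (i : Fin m) : dup g i i.succ = g i := by
  have : ¬ ((i.succ : Fin (m+1)) : ℕ) ≤ (i : ℕ) := by simp
  rw [dup, dif_neg this]
  congr 1

lemma clp_dup {m : ℕ} (g : Fin m → α) (i : Fin m) : clp (dup g i) i = g := by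
  funext j
  rw [clp]
  split_ifs with h
  · rw [dup, dif_pos (by simpa using h)]
    congr 1
  · rw [dup, dif_neg (by simp; omega)]
    congr 1

lemma dup_clp {m : ℕ} (f : Fin (m+1) → α) (i : Fin m) (hf : f i.castSucc = f i.succ) :
    dup (clp f i) i = f := by
  funext r
  rw [dup]
  split_ifs with h
  · rw [clp]
    rw [if_pos (by simpa using h)]
    congr 1
  · rw [clp]
    split_ifs with h'
    · -- (r:ℕ) - 1 ≤ i and (r:ℕ) > i, so (r:ℕ) = i+1, r = i.succ
      have hr : (r : ℕ) = (i : ℕ) + 1 := by simp at h h'; omega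
      have hcs : ((⟨(r : ℕ) - 1, by have := r.isLt; omega⟩ : Fin m)).castSucc = i.castSucc := by
        exact Fin.ext (by simp [hr])
      rw [hcs, hf]
      congr 1
      exact Fin.ext (by simp [hr])
    · congr 1
      exact Fin.ext (by simp at h h' ⊢; omega)

/-- D4: duplicating the `i`-th entry preserves the rank of position `i`. -/
lemma rk_dup {m : ℕ} (g : Fin m → α) (i : Fin m) :
    rk g i = rk (dup g i) i.castSucc := by
  set f := dup g i with hfdef
  have hfi : f i.castSucc = g i := dup_castSucc g i
  have hembA : ∀ j : Fin m, (j : ℕ) ≤ (i : ℕ) → f j.castSucc = g j := by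
    intro j h
    rw [hfdef, dup, dif_pos (by simpa using h)]
    congr 1
  have hembB : ∀ j : Fin m, ¬ (j : ℕ) ≤ (i : ℕ) → f j.succ = g j := by
    intro j h
    rw [hfdef, dup, dif_neg (by simp; omega)]
    congr 1
  have key : ∀ j : Fin m, mlt g j i ↔
      mlt f (if (j : ℕ) ≤ (i : ℕ) then j.castSucc else j.succ) i.castSucc := by
    intro j
    by_cases h : (j : ℕ) ≤ (i : ℕ)
    · rw [if_pos h]
      unfold mlt
      rw [hembA j h, hfi, Fin.castSucc_lt_castSucc_iff]
    · rw [if_neg h]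
      unfold mlt
      rw [hembB j h, hfi]
      constructor
      · rintro (hlt | ⟨he, hlt⟩)
        · exact Or.inl hlt
        · exact absurd (Fin.lt_def.mp hlt) (by omega)
      · rintro (hlt | ⟨he, hlt⟩)
        · exact Or.inl hlt
        · exfalso
          have := Fin.lt_def.mp hlt
          simp only [Fin.val_succ, Fin.coe_castSucc] at this
          omega
  apply Finset.card_bij
    (fun (j : Fin m) (_ : j ∈ Finset.univ.filter fun r => mlt g r i) =>
      if (j : ℕ) ≤ (i : ℕ) then j.castSucc else j.succ)
  · intro j hj
    simp only [Finset.mem_filter, Finset.mem_univ, true_and] at hj ⊢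
    exact (key j).mp hj
  · intro j1 _ j2 _ heq
    have hv := congrArg Fin.val heq
    apply Fin.ext
    split_ifs at hv <;>
      simp only [Fin.coe_castSucc, Fin.val_succ] at hv <;> omega
  · intro r hr
    have hmlt : mlt f r i.castSucc := by simpa using hr
    have hrne : (r : ℕ) ≠ (i : ℕ) + 1 := by
      intro hrv
      have hre : r = i.succ := Fin.ext (by simpa using hrv)
      rw [hre] at hmlt
      rcases hmlt with h | ⟨h1, h2⟩
      · rw [hfdef, dup_succ, dup_castSucc] at h
        exact absurd h (lt_irrefl _)
      · have := Fin.lt_def.mp h2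
        simp only [Fin.val_succ, Fin.coe_castSucc] at this
        omega
    by_cases h : (r : ℕ) ≤ (i : ℕ)
    · refine ⟨⟨(r : ℕ), lt_of_le_of_lt h i.isLt⟩, ?_, ?_⟩
      · have hemb : (if ((⟨(r : ℕ), lt_of_le_of_lt h i.isLt⟩ : Fin m) : ℕ) ≤ (i : ℕ)
            then (⟨(r : ℕ), lt_of_le_of_lt h i.isLt⟩ : Fin m).castSucc
            else (⟨(r : ℕ), lt_of_le_of_lt h i.isLt⟩ : Fin m).succ) = r := by
          rw [if_pos h]
          exact Fin.ext (by simp)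
        simp only [Finset.mem_filter, Finset.mem_univ, true_and]
        rw [key ⟨(r : ℕ), lt_of_le_of_lt h i.isLt⟩, hemb]
        exact hmlt
      · rw [if_pos h]
        exact Fin.ext (by simp)
    · have hrm : (r : ℕ) - 1 < m := by have := r.isLt; omega
      have hnle : ¬ ((⟨(r : ℕ) - 1, hrm⟩ : Fin m) : ℕ) ≤ (i : ℕ) := by
        simp only []
        omega
      refine ⟨⟨(r : ℕ) - 1, hrm⟩, ?_, ?_⟩
      · have hemb : (if ((⟨(r : ℕ) - 1, hrm⟩ : Fin m) : ℕ) ≤ (i : ℕ)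
            then (⟨(r : ℕ) - 1, hrm⟩ : Fin m).castSucc
            else (⟨(r : ℕ) - 1, hrm⟩ : Fin m).succ) = r := by
          rw [if_neg hnle]
          exact Fin.ext (by simp; omega)
        simp only [Finset.mem_filter, Finset.mem_univ, true_and]
        rw [key ⟨(r : ℕ) - 1, hrm⟩, hemb]
        exact hmlt
      · rw [if_neg hnle]
        exact Fin.ext (by simp; omega)

end GSRAux

namespace GSRAux

/-- signed comparison -/
def sgn (x y : ℕ) : ℤ := (if x < y then 1 else 0) - (if y < x then 1 else 0)

lemma sgn_antisymm (x y : ℕ) : sgn y x = - sgn x y := by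
  unfold sgn; ring

lemma asc_count {m : ℕ} (u : Fin (m+1) → ℕ) :
    wordAscents u = (Finset.univ.filter fun i : Fin m => u i.castSucc < u i.succ).card := by
  unfold wordAscents
  apply Finset.card_bij (fun k hk => (⟨k, by
      simp only [Finset.mem_filter, Finset.mem_range] at hk
      obtain ⟨-, h, -⟩ := hk
      omega⟩ : Fin m))
  · intro k hk
    simp only [Finset.mem_filter, Finset.mem_range] at hk
    obtain ⟨hk1, h, hR⟩ := hk
    simp only [Finset.mem_filter, Finset.mem_univ, true_and]
    exact hR
  · intro k1 hk1 k2 hk2 he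
    exact congrArg Fin.val he
  · intro j hj
    simp only [Finset.mem_filter, Finset.mem_univ, true_and] at hj
    refine ⟨(j : ℕ), ?_, Fin.ext rfl⟩
    simp only [Finset.mem_filter, Finset.mem_range]
    have hjm := j.isLt
    exact ⟨by omega, by omega, hj⟩

lemma des_count {m : ℕ} (u : Fin (m+1) → ℕ) :
    wordDescents u = (Finset.univ.filter fun i : Fin m => u i.succ < u i.castSucc).card := by
  unfold wordDescents
  apply Finset.card_bij (fun k hk => (⟨k, by
      simp only [Finset.mem_filter, Finset.mem_range] at hk
      obtain ⟨-, h, -⟩ := hk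
      omega⟩ : Fin m))
  · intro k hk
    simp only [Finset.mem_filter, Finset.mem_range] at hk
    obtain ⟨hk1, h, hR⟩ := hk
    simp only [Finset.mem_filter, Finset.mem_univ, true_and]
    exact hR
  · intro k1 hk1 k2 hk2 he
    exact congrArg Fin.val he
  · intro j hj
    simp only [Finset.mem_filter, Finset.mem_univ, true_and] at hj
    refine ⟨(j : ℕ), ?_, Fin.ext rfl⟩
    simp only [Finset.mem_filter, Finset.mem_range]
    have hjm := j.isLt
    exact ⟨by omega, by omega, hj⟩

end GSRAux

namespace GSRAux

lemma asc_sub_des {m : ℕ} (u : Fin (m+1) → ℕ) :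
    (wordAscents u : ℤ) - (wordDescents u : ℤ)
      = ∑ i : Fin m, sgn (u i.castSucc) (u i.succ) := by
  have h1 : wordAscents u
      = (Finset.univ.filter fun i : Fin m => u i.castSucc < u i.succ).card := asc_count u
  have h2 : wordDescents u
      = (Finset.univ.filter fun i : Fin m => u i.succ < u i.castSucc).card := des_count u
  rw [h1, h2, Finset.card_filter, Finset.card_filter]
  push_cast
  rw [← Finset.sum_sub_distrib]
  exact Finset.sum_congr rfl fun i _ => rfl

lemma step2 {m a : ℕ} (w : Fin (m+1) → ℕ) (i : Fin m) :
    (∑ f : Fin (m+1) → Fin a,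
        sgn (w ((Tuple.sort f)⁻¹ i.castSucc)) (w ((Tuple.sort f)⁻¹ i.succ)))
      = ∑ g : Fin m → Fin a,
          sgn (w (((Tuple.sort g)⁻¹ i).castSucc)) (w (((Tuple.sort g)⁻¹ i).succ)) := by
  rw [← Finset.sum_filter_add_sum_filter_not Finset.univ
      (fun f : Fin (m+1) → Fin a => f i.castSucc = f i.succ)]
  have hzero : (∑ f ∈ Finset.univ.filter
      (fun f : Fin (m+1) → Fin a => ¬ f i.castSucc = f i.succ),
        sgn (w ((Tuple.sort f)⁻¹ i.castSucc)) (w ((Tuple.sort f)⁻¹ i.succ))) = 0 := by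
    apply Finset.sum_involution
      (g := fun f _ => f ∘ (Equiv.swap i.castSucc i.succ))
      (g_mem := fun f hf => by
        simp only [Finset.mem_filter, Finset.mem_univ, true_and] at hf ⊢
        simp only [Function.comp_apply, Equiv.swap_apply_left, Equiv.swap_apply_right]
        exact fun h => hf h.symm)
    · intro f hf
      have hne : ¬ f i.castSucc = f i.succ := (Finset.mem_filter.mp hf).2
      have e1 : (Tuple.sort (f ∘ ⇑(Equiv.swap i.castSucc i.succ)))⁻¹ i.castSucc
          = (Tuple.sort f)⁻¹ i.succ := by
        apply Fin.ext
        rw [sortinv_eq_rk, sortinv_eq_rk, rk_swap₁ f i hne]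
      have e2 : (Tuple.sort (f ∘ ⇑(Equiv.swap i.castSucc i.succ)))⁻¹ i.succ
          = (Tuple.sort f)⁻¹ i.castSucc := by
        apply Fin.ext
        rw [sortinv_eq_rk, sortinv_eq_rk, rk_swap₂ f i hne]
      rw [e1, e2, sgn_antisymm]
      ring
    · intro f hf _
      intro heq
      have hne : ¬ f i.castSucc = f i.succ := (Finset.mem_filter.mp hf).2
      have hcf := congrFun heq i.castSucc
      simp only [Function.comp_apply, Equiv.swap_apply_left] at hcf
      exact hne hcf.symm
    · intro f hf
      funext r
      simp [Function.comp_apply, Equiv.swap_apply_self]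
  rw [hzero, add_zero]
  refine Finset.sum_bij' (fun f _ => clp f i) (fun g _ => dup g i) ?_ ?_ ?_ ?_ ?_
  · intro f _
    exact Finset.mem_univ _
  · intro g _
    simp only [Finset.mem_filter, Finset.mem_univ, true_and]
    rw [dup_castSucc, dup_succ]
  · intro f hf
    exact dup_clp f i (Finset.mem_filter.mp hf).2
  · intro g _
    exact clp_dup g i
  · intro f hf
    have hfe : f i.castSucc = f i.succ := (Finset.mem_filter.mp hf).2
    have hfd : dup (clp f i) i = f := dup_clp f i hfe
    have h4 : rk f i.castSucc = rk (clp f i) i := by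
      conv_lhs => rw [← hfd]
      exact (rk_dup _ _).symm
    have e1 : (Tuple.sort f)⁻¹ i.castSucc = ((Tuple.sort (clp f i))⁻¹ i).castSucc := by
      apply Fin.ext
      rw [sortinv_eq_rk, Fin.coe_castSucc, sortinv_eq_rk, h4]
    have e2 : (Tuple.sort f)⁻¹ i.succ = ((Tuple.sort (clp f i))⁻¹ i).succ := by
      apply Fin.ext
      rw [sortinv_eq_rk, rk_succ_of_eq f i hfe, Fin.val_succ, sortinv_eq_rk, h4]
    rw [e1, e2]

end GSRAux

open GSRAux in
/-- `asc − des` is a right eigenfunction, with eigenvalue `1/a`, of the GSR `a`-shuffle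
on decks of any composition: summing over all cut-label functions `f : [n] → [a]`
(where `Tuple.sort f` lists the positions in increasing lexicographic order of the
pairs `(f i, i)`, so the shuffle produces the word `w ∘ (Tuple.sort f)⁻¹`),
`Σ_f [asc(w ∘ ρ_f⁻¹) − des(w ∘ ρ_f⁻¹)] = a^{n−1} · [asc(w) − des(w)]`. -/
theorem gsr_word_ascents_minus_descents_eigenfunction (n a : ℕ) (hn : 1 ≤ n)
    (ha : 1 ≤ a) (w : Fin n → ℕ) :
    ∑ f : Fin n → Fin a,
        ((wordAscents (w ∘ ⇑(Tuple.sort f)⁻¹) : ℤ) -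
          (wordDescents (w ∘ ⇑(Tuple.sort f)⁻¹) : ℤ)) =
      (a : ℤ) ^ (n - 1) * ((wordAscents w : ℤ) - (wordDescents w : ℤ)) := by
  obtain ⟨m, rfl⟩ : ∃ m, n = m + 1 := ⟨n - 1, by omega⟩
  have hstep1 : ∀ f : Fin (m+1) → Fin a,
      ((wordAscents (w ∘ ⇑(Tuple.sort f)⁻¹) : ℤ) -
          (wordDescents (w ∘ ⇑(Tuple.sort f)⁻¹) : ℤ))
        = ∑ i : Fin m,
            sgn (w ((Tuple.sort f)⁻¹ i.castSucc)) (w ((Tuple.sort f)⁻¹ i.succ)) :=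
    fun f => asc_sub_des (w ∘ ⇑(Tuple.sort f)⁻¹)
  have main1 : (∑ f : Fin (m+1) → Fin a,
      ((wordAscents (w ∘ ⇑(Tuple.sort f)⁻¹) : ℤ) -
          (wordDescents (w ∘ ⇑(Tuple.sort f)⁻¹) : ℤ)))
      = ∑ f : Fin (m+1) → Fin a, ∑ i : Fin m,
          sgn (w ((Tuple.sort f)⁻¹ i.castSucc)) (w ((Tuple.sort f)⁻¹ i.succ)) :=
    Finset.sum_congr rfl fun f _ => hstep1 f
  rw [main1, Finset.sum_comm]
  have main2 : (∑ i : Fin m, ∑ f : Fin (m+1) → Fin a,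
      sgn (w ((Tuple.sort f)⁻¹ i.castSucc)) (w ((Tuple.sort f)⁻¹ i.succ)))
      = ∑ i : Fin m, ∑ g : Fin m → Fin a,
          sgn (w (((Tuple.sort g)⁻¹ i).castSucc)) (w (((Tuple.sort g)⁻¹ i).succ)) :=
    Finset.sum_congr rfl fun i _ => step2 w i
  rw [main2, Finset.sum_comm]
  have main3 : (∑ g : Fin m → Fin a, ∑ i : Fin m,
      sgn (w (((Tuple.sort g)⁻¹ i).castSucc)) (w (((Tuple.sort g)⁻¹ i).succ)))
      = ∑ _g : Fin m → Fin a, ∑ j : Fin m, sgn (w j.castSucc) (w j.succ) :=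
    Finset.sum_congr rfl fun g _ =>
      Equiv.sum_comp ((Tuple.sort g)⁻¹ : Equiv.Perm (Fin m))
        (fun j => sgn (w j.castSucc) (w j.succ))
  rw [main3, Finset.sum_const, Finset.card_univ]
  have hcard : Fintype.card (Fin m → Fin a) = a ^ m := by simp
  rw [hcard, asc_sub_des w]
  simp only [Nat.add_sub_cancel]
  rw [nsmul_eq_mul]
  push_cast
  ring
end

section
/- Fix n ≥ 1 and let C⁰ be a simplicial complex on vertex set {1,…,n}, i.e., a family of nonempty subsets of {1,…,n} closed under taking nonempty subsets and containing all singletons. Consider the Markov chain on such complexes with transition probabilities P(C, C') = 2^{−n} · #{S ⊆ {1,…,n} : C' = {A ∈ C : A ⊆ S or A ⊆ Sᶜ}} (color the vertices red/blue independently with probability 1/2 and erase all faces containing vertices of both colors). Let C_• be the absorbing complex consisting of the n singletons. Then for every k ≥ 0, the k-step probability of absorption equals the number of proper 2^k-colorings of the 1-skeleton divided by 2^{nk}: P^k(C⁰, C_•) = 2^{−nk} · #{c : {1,…,n} → {1,…,2^k} : for every 2-element face {x,y} ∈ C⁰, c(x) ≠ c(y)}. In particular, P^k(C⁰, C_•)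 = p₀(2^k)/2^{nk}, where p₀ is the chromatic polynomial of the graph whose edges are the 2-element faces of C⁰. -/
open scoped Classical

/-- A simplicial complex on the vertex set `{1, …, n}`: a family of nonempty subsets
closed under taking nonempty subsets and containing all singletons. -/
def SimpComplex (n : ℕ) : Type :=
  {C : Finset (Finset (Fin n)) //
    (∀ A ∈ C, A.Nonempty) ∧
    (∀ A ∈ C, ∀ B ⊆ A, B.Nonempty → B ∈ C) ∧
    (∀ v : Fin n, {v} ∈ C)}

noncomputable instance (n : ℕ) : Fintype (SimpComplex n) := Subtype.fintype _

instance (n : ℕ) : DecidableEq (SimpComplex n) := Subtype.instDecidableEq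

/-- The vertex-coloring Markov chain on simplicial complexes: color the vertices
red/blue uniformly and independently, and keep only the faces that are monochromatic
(contained in the red set `S` or in the blue set `Sᶜ`). -/
noncomputable def simpComplexMatrix (n : ℕ) :
    Matrix (SimpComplex n) (SimpComplex n) ℚ :=
  Matrix.of fun C C' =>
    ((Finset.univ.filter fun S : Finset (Fin n) =>
        C'.1 = C.1.filter fun A => A ⊆ S ∨ A ⊆ Sᶜ).card : ℚ) / 2 ^ n

/-- The absorbing complex consisting of the `n` singletons. -/
def pointsComplex (n : ℕ) : SimpComplex n :=
  ⟨Finset.univ.image fun v => ({v} : Finset (Fin n)),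
    by
      intro A hA
      rcases Finset.mem_image.mp hA with ⟨v, -, rfl⟩
      exact Finset.singleton_nonempty v,
    by
      intro A hA B hB hBne
      rcases Finset.mem_image.mp hA with ⟨v, -, rfl⟩
      rcases (Finset.subset_singleton_iff.mp hB) with rfl | rfl
      · exact absurd hBne (by simp)
      · exact hA,
    fun v => Finset.mem_image.mpr ⟨v, Finset.mem_univ v, rfl⟩⟩

namespace SCAux

variable {n : ℕ}

/-- properness of a coloring wrt a set of faces -/
def proper (C : Finset (Finset (Fin n))) {m : ℕ} (c : Fin n → Fin m) : Prop :=
  ∀ x y : Fin n, x ≠ y → ({x, y} : Finset (Fin n)) ∈ C → c x ≠ c y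

/-- restricted complex -/
def restrict (C : SimpComplex n) (S : Finset (Fin n)) : SimpComplex n :=
  ⟨C.1.filter fun A => A ⊆ S ∨ A ⊆ Sᶜ, by
    obtain ⟨h1, h2, h3⟩ := C.2
    refine ⟨?_, ?_, ?_⟩
    · intro A hA
      exact h1 A (Finset.mem_filter.mp hA).1
    · intro A hA B hB hBne
      obtain ⟨hAC, hAS⟩ := Finset.mem_filter.mp hA
      refine Finset.mem_filter.mpr ⟨h2 A hAC B hB hBne, ?_⟩
      rcases hAS with h | h
      · exact Or.inl (hB.trans h)
      · exact Or.inr (hB.trans h)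
    · intro v
      refine Finset.mem_filter.mpr ⟨h3 v, ?_⟩
      by_cases hv : v ∈ S
      · exact Or.inl (by simpa using hv)
      · exact Or.inr (by simpa using hv)⟩

lemma points_iff (C : SimpComplex n) :
    C = pointsComplex n ↔ ∀ x y : Fin n, x ≠ y → ({x, y} : Finset (Fin n)) ∉ C.1 := by
  constructor
  · rintro rfl x y hxy h
    rcases Finset.mem_image.mp h with ⟨v, -, hv⟩
    have : ({x, y} : Finset (Fin n)).card = 1 := by rw [← hv]; simp
    rw [Finset.card_insert_of_notMem (by simp [hxy]), Finset.card_singleton] at this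
    omega
  · intro h
    obtain ⟨h1, h2, h3⟩ := C.2
    apply Subtype.ext
    apply Finset.ext
    intro A
    constructor
    · intro hA
      obtain ⟨x, hx⟩ := h1 A hA
      have hAx : A = {x} := by
        by_contra hne
        obtain ⟨y, hy, hyx⟩ : ∃ y ∈ A, y ≠ x := by
          by_contra hc
          push_neg at hc
          exact hne (Finset.eq_singleton_iff_unique_mem.mpr ⟨hx, hc⟩)
        have hsub : ({x, y} : Finset (Fin n)) ⊆ A := by
          intro z hz
          rcases Finset.mem_insert.mp hz with rfl | hz
          · exact hx
          · rwa [Finset.mem_singleton.mp hz]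
        exact h x y (Ne.symm hyx) (h2 A hA _ hsub ⟨x, by simp⟩)
      subst hAx
      exact Finset.mem_image.mpr ⟨x, Finset.mem_univ x, rfl⟩
    · intro hA
      rcases Finset.mem_image.mp hA with ⟨v, -, rfl⟩
      exact h3 v

/-- the key combinatorial bijection -/
lemma key (C : SimpComplex n) (k : ℕ) :
    (Finset.univ.filter fun c : Fin n → Fin (2 ^ (k + 1)) =>
      ∀ x y : Fin n, x ≠ y → ({x, y} : Finset (Fin n)) ∈ C.1 → c x ≠ c y).card
      = ∑ S : Finset (Fin n),
          (Finset.univ.filter fun c : Fin n → Fin (2 ^ k) =>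
            ∀ x y : Fin n, x ≠ y → ({x, y} : Finset (Fin n)) ∈ (restrict C S).1 →
              c x ≠ c y).card := by
  classical
  set e1 : Fin (2 ^ (k + 1)) ≃ Fin (2 ^ k) × Fin 2 :=
    (finCongr (pow_succ 2 k)).trans finProdFinEquiv.symm with he1
  have fin2 : ∀ b : Fin 2, b ≠ 0 → b = 1 := by decide
  set toS : (Fin n → Fin (2 ^ (k + 1))) → Finset (Fin n) :=
    fun c => Finset.univ.filter fun v => (e1 (c v)).2 = 0 with htoS
  rw [Finset.card_eq_sum_card_fiberwise (f := toS) (t := Finset.univ)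
    (fun x _ => Finset.mem_univ _)]
  refine Finset.sum_congr rfl fun S _ => ?_
  refine Finset.card_bij' (fun c _ => fun v => (e1 (c v)).1)
    (fun c' _ => fun v => e1.symm (c' v, if v ∈ S then 0 else 1)) ?_ ?_ ?_ ?_
  · -- forward membership
    intro c hc
    simp only [Finset.mem_filter, Finset.mem_univ, true_and] at hc ⊢
    obtain ⟨hp, hS⟩ := hc
    intro x y hxy hmem heq
    simp only [restrict, Finset.mem_filter] at hmem
    obtain ⟨hmemC, hside⟩ := hmem
    have hbit : (e1 (c x)).2 = (e1 (c y)).2 := by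
      subst hS
      rcases hside with h | h
      · have hx := h (Finset.mem_insert_self x {y})
        have hy := h (Finset.mem_insert_of_mem (Finset.mem_singleton_self y))
        simp only [htoS, Finset.mem_filter, Finset.mem_univ, true_and] at hx hy
        rw [hx, hy]
      · have hx := h (Finset.mem_insert_self x {y})
        have hy := h (Finset.mem_insert_of_mem (Finset.mem_singleton_self y))
        simp only [htoS, Finset.compl_filter, Finset.mem_filter, Finset.mem_univ,
          true_and] at hx hy
        rw [fin2 _ hx, fin2 _ hy]
    have : e1 (c x) = e1 (c y) := Prod.ext heq hbit
    exact hp x y hxy hmemC (e1.injective this)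
  · -- backward membership
    intro c' hc'
    simp only [Finset.mem_filter, Finset.mem_univ, true_and] at hc' ⊢
    constructor
    · intro x y hxy hmem heq
      apply Equiv.injective e1.symm at heq
      by_cases hb : (x ∈ S) = (y ∈ S)
      · have hedge : ({x, y} : Finset (Fin n)) ∈ (restrict C S).1 := by
          simp only [restrict, Finset.mem_filter]
          refine ⟨hmem, ?_⟩
          by_cases hx : x ∈ S
          · exact Or.inl (by
              intro z hz
              rcases Finset.mem_insert.mp hz with rfl | hz
              · exact hx
              · rw [Finset.mem_singleton.mp hz]; rwa [← hb])
          · exact Or.inr (by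
              intro z hz
              rcases Finset.mem_insert.mp hz with rfl | hz
              · simpa using hx
              · rw [Finset.mem_singleton.mp hz]; simp [← hb, hx])
        exact hc' x y hxy hedge (congrArg Prod.fst heq)
      · have := congrArg Prod.snd heq
        simp only at this
        by_cases hx : x ∈ S <;> by_cases hy : y ∈ S <;>
          simp [hx, hy] at this hb
    · -- toS of reconstructed = S
      apply Finset.ext
      intro v
      simp only [htoS, Finset.mem_filter, Finset.mem_univ, true_and,
        Equiv.apply_symm_apply]
      by_cases hv : v ∈ S <;> simp [hv]
  · -- left inverse
    intro c hc
    funext v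
    simp only [Finset.mem_filter, Finset.mem_univ, true_and] at hc
    have hS := hc.2
    subst hS
    simp only [htoS, Finset.mem_filter, Finset.mem_univ, true_and]
    by_cases hb : (e1 (c v)).2 = 0
    · rw [if_pos hb, ← hb]
      exact e1.symm_apply_apply _
    · rw [if_neg hb, ← fin2 _ hb]
      exact e1.symm_apply_apply _
  · -- right inverse
    intro c' _
    funext v
    simp

lemma matrix_apply (C C' : SimpComplex n) :
    simpComplexMatrix n C C' =
      ((Finset.univ.filter fun S : Finset (Fin n) => restrict C S = C').card : ℚ)
        / 2 ^ n := by
  have h : (Finset.univ.filter fun S : Finset (Fin n) =>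
      C'.1 = C.1.filter fun A => A ⊆ S ∨ A ⊆ Sᶜ)
      = Finset.univ.filter fun S => restrict C S = C' := by
    apply Finset.filter_congr
    intro S _
    exact ⟨fun h => Subtype.ext h.symm, fun h => (congrArg Subtype.val h).symm⟩
  simp only [simpComplexMatrix, Matrix.of_apply, h]

theorem main (C0 : SimpComplex n) (k : ℕ) :
    (simpComplexMatrix n ^ k) C0 (pointsComplex n) =
      ((2 : ℚ) ^ (n * k))⁻¹ *
        ((Finset.univ.filter fun c : Fin n → Fin (2 ^ k) =>
            ∀ x y : Fin n, x ≠ y → ({x, y} : Finset (Fin n)) ∈ C0.1 →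
              c x ≠ c y).card : ℚ) := by
  induction k generalizing C0 with
  | zero =>
    simp only [pow_zero, Matrix.one_apply, Nat.mul_zero, inv_one, one_mul]
    by_cases h : C0 = pointsComplex n
    · rw [if_pos h]
      have hno : ∀ x y : Fin n, x ≠ y → ({x, y} : Finset (Fin n)) ∉ C0.1 :=
        (points_iff C0).mp h
      have : (Finset.univ.filter fun c : Fin n → Fin (2 ^ 0) =>
          ∀ x y : Fin n, x ≠ y → ({x, y} : Finset (Fin n)) ∈ C0.1 → c x ≠ c y)
          = Finset.univ := by
        apply Finset.filter_true_of_mem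
        intro c _ x y hxy hm
        exact absurd hm (hno x y hxy)
      rw [this, Finset.card_univ]
      simp
    · rw [if_neg h]
      obtain ⟨x, y, hxy, hm⟩ : ∃ x y : Fin n, x ≠ y ∧ ({x, y} : Finset (Fin n)) ∈ C0.1 := by
        by_contra hc
        push_neg at hc
        exact h ((points_iff C0).mpr fun x y h1 h2 => (hc x y h1) h2)
      have : (Finset.univ.filter fun c : Fin n → Fin (2 ^ 0) =>
          ∀ x y : Fin n, x ≠ y → ({x, y} : Finset (Fin n)) ∈ C0.1 → c x ≠ c y)
          = ∅ := by
        apply Finset.filter_false_of_mem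
        intro c _ hp
        have h1 := (c x).isLt
        have h2 := (c y).isLt
        norm_num at h1 h2
        exact hp x y hxy hm (Fin.ext (by omega))
      rw [this]
      simp
  | succ k ih =>
    rw [pow_succ', Matrix.mul_apply]
    have step1 : ∀ C' : SimpComplex n,
        simpComplexMatrix n C0 C' * (simpComplexMatrix n ^ k) C' (pointsComplex n)
          = (2 ^ n : ℚ)⁻¹ * ∑ S ∈ Finset.univ.filter
              (fun S : Finset (Fin n) => restrict C0 S = C'),
              (simpComplexMatrix n ^ k) (restrict C0 S) (pointsComplex n) := by
      intro C'
      rw [matrix_apply, div_eq_mul_inv, mul_comm ((_ : ℚ)) ((2:ℚ)^n)⁻¹, mul_assoc]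
      congr 1
      rw [Finset.sum_congr rfl (fun S hS => by
        rw [(Finset.mem_filter.mp hS).2]), Finset.sum_const, nsmul_eq_mul]
    rw [Finset.sum_congr rfl fun C' _ => step1 C', ← Finset.mul_sum,
      Finset.sum_fiberwise (g := fun S => restrict C0 S)
        (f := fun S => (simpComplexMatrix n ^ k) (restrict C0 S) (pointsComplex n))]
    rw [Finset.sum_congr rfl fun S _ => ih (restrict C0 S), ← Finset.mul_sum,
      ← Nat.cast_sum]
    have hkey := key C0 k
    rw [show (∑ S : Finset (Fin n),
        (Finset.univ.filter fun c : Fin n → Fin (2 ^ k) =>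
          ∀ x y : Fin n, x ≠ y → ({x, y} : Finset (Fin n)) ∈ (restrict C0 S).1 →
            c x ≠ c y).card) =
        (Finset.univ.filter fun c : Fin n → Fin (2 ^ (k + 1)) =>
          ∀ x y : Fin n, x ≠ y → ({x, y} : Finset (Fin n)) ∈ C0.1 →
            c x ≠ c y).card from hkey.symm]
    rw [← mul_assoc]
    congr 1
    rw [← mul_inv, ← pow_add]
    ring_nf

end SCAux

/-- The `k`-step absorption probability of the vertex-coloring chain on simplicial
complexes equals the number of proper `2^k`-colorings of the 1-skeleton divided by
`2^{nk}` (the chromatic polynomial of the 1-skeleton evaluated at `2^k`, over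
`2^{nk}`). -/
theorem simpComplex_absorption_chromatic (n : ℕ) (hn : 1 ≤ n) (C0 : SimpComplex n)
    (k : ℕ) :
    (simpComplexMatrix n ^ k) C0 (pointsComplex n) =
      ((2 : ℚ) ^ (n * k))⁻¹ *
        ((Finset.univ.filter fun c : Fin n → Fin (2 ^ k) =>
            ∀ x y : Fin n, x ≠ y → ({x, y} : Finset (Fin n)) ∈ C0.1 →
              c x ≠ c y).card : ℚ) := by
  exact SCAux.main C0 k
end
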